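/- arXiv:2003.09023 — 9 statements merged into one kernel-verified Lean document; each statement's English description precedes it below -/
import Mathlib

section
/- For a ∈ (-∞, 1), the function ψ(t) = t(1+t²)^{-a/2} / ∫₀ᵗ (1+s²)^{-a/2} ds defined for t > 0 satisfies inf_{t>0} ψ(t) = min{1, 1-a} and sup_{t>0} ψ(t) = max{1, 1-a}. -/
open MeasureTheory Filter

noncomputable section Stmt0Aux

namespace Stmt0Aux

variable (a : ℝ)

def f (s : ℝ) : ℝ := (1 + s ^ 2) ^ (-a / 2)
def g (s : ℝ) : ℝ := (1 + s ^ 2) ^ (-a / 2 - 1) * (1 + (1 - a) * s ^ 2)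
def F (t : ℝ) : ℝ := ∫ s in (0:ℝ)..t, f a s
def r (s : ℝ) : ℝ := (1 - a) + a * (1 + s ^ 2)⁻¹

variable {a}

lemma base_pos (s : ℝ) : (0:ℝ) < 1 + s ^ 2 := by positivity

lemma f_pos (s : ℝ) : 0 < f a s := Real.rpow_pos_of_pos (base_pos s) _

lemma f_cont : Continuous (f a) := by
  apply Continuous.rpow_const (by continuity)
  intro x; exact Or.inl (ne_of_gt (base_pos x))

lemma g_cont : Continuous (g a) := by
  apply Continuous.mul
  · apply Continuous.rpow_const (by continuity)
    intro x; exact Or.inl (ne_of_gt (base_pos x))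
  · continuity

lemma r_cont : Continuous (r a) := by
  apply Continuous.add continuous_const
  apply Continuous.mul continuous_const
  exact Continuous.inv₀ (by continuity) (fun x => ne_of_gt (base_pos x))

lemma f_eq (s : ℝ) : f a s = (1 + s ^ 2) * (1 + s ^ 2) ^ (-a / 2 - 1) := by
  rw [f]
  nth_rewrite 1 [show -a/2 = 1 + (-a/2 - 1) by ring]
  rw [Real.rpow_add (base_pos s), Real.rpow_one]

lemma g_eq (s : ℝ) : g a s = r a s * f a s := by
  rw [g, r, f_eq]
  have h := (base_pos s).ne'
  field_simp
  ring

lemma G_deriv (s : ℝ) :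
    HasDerivAt (fun t : ℝ => t * (1 + t ^ 2) ^ (-a / 2)) (g a s) s := by
  have h1 : HasDerivAt (fun t : ℝ => 1 + t ^ 2) (2 * s) s := by
    simpa using ((hasDerivAt_pow 2 s).const_add 1)
  have h2 : HasDerivAt (fun t : ℝ => (1 + t ^ 2) ^ (-a / 2))
      (2 * s * (-a / 2) * (1 + s ^ 2) ^ (-a / 2 - 1)) s :=
    h1.rpow_const (Or.inl (ne_of_gt (base_pos s)))
  have h3 : HasDerivAt (fun t : ℝ => t * (1 + t ^ 2) ^ (-a / 2))
      (1 * (1 + s ^ 2) ^ (-a / 2) + id s * (2 * s * (-a / 2) * (1 + s ^ 2) ^ (-a / 2 - 1))) s :=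
    (hasDerivAt_id s).mul h2
  convert h3 using 1
  have hf := f_eq (a := a) s
  simp only [f] at hf
  rw [g, hf]
  simp only [id_eq]
  ring

lemma G_eq (t : ℝ) : t * (1 + t ^ 2) ^ (-a / 2) = ∫ s in (0:ℝ)..t, g a s := by
  have h := intervalIntegral.integral_eq_sub_of_hasDerivAt
    (f := fun t : ℝ => t * (1 + t ^ 2) ^ (-a / 2)) (a := 0) (b := t)
    (fun s _ => G_deriv s) (g_cont.intervalIntegrable 0 t)
  rw [h]; norm_num

lemma F_pos {t : ℝ} (ht : 0 < t) : 0 < F a t :=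
  intervalIntegral.intervalIntegral_pos_of_pos (f_cont.intervalIntegrable 0 t)
    (fun s => f_pos s) ht

lemma F_nonneg {t : ℝ} (ht : 0 ≤ t) : 0 ≤ F a t := by
  rcases eq_or_lt_of_le ht with h | h
  · simp [F, ← h]
  · exact (F_pos h).le

lemma inv_base_le_one (s : ℝ) : (1 + s ^ 2)⁻¹ ≤ 1 := by
  rw [inv_le_one_iff₀]; right; nlinarith [sq_nonneg s]

lemma inv_base_pos (s : ℝ) : 0 < (1 + s ^ 2)⁻¹ := by positivity

lemma inv_base_mono {s t : ℝ} (hs : 0 ≤ s) (hst : s ≤ t) :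
    (1 + t ^ 2)⁻¹ ≤ (1 + s ^ 2)⁻¹ := by
  apply inv_anti₀ (base_pos s)
  nlinarith

lemma r_global (ha : a < 1) (s : ℝ) :
    min 1 (1 - a) ≤ r a s ∧ r a s ≤ max 1 (1 - a) := by
  have h1 := inv_base_le_one s
  have h2 := (inv_base_pos s).le
  rcases le_total 0 a with h | h
  · exact ⟨le_trans (min_le_right _ _) (by simp only [r]; nlinarith),
      le_trans (by simp only [r]; nlinarith) (le_max_left _ _)⟩
  · exact ⟨le_trans (min_le_left _ _) (by simp only [r]; nlinarith),
      le_trans (by simp only [r]; nlinarith) (le_max_right _ _)⟩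

lemma r_near {t s : ℝ} (hs0 : 0 ≤ s) (hst : s ≤ t) :
    min 1 (r a t) ≤ r a s ∧ r a s ≤ max 1 (r a t) := by
  have h1 := inv_base_le_one s
  have h2 := inv_base_mono hs0 hst
  rcases le_total 0 a with h | h
  · exact ⟨le_trans (min_le_right _ _) (by simp only [r]; nlinarith),
      le_trans (by simp only [r]; nlinarith) (le_max_left _ _)⟩
  · exact ⟨le_trans (min_le_left _ _) (by simp only [r]; nlinarith),
      le_trans (by simp only [r]; nlinarith) (le_max_right _ _)⟩

lemma r_tail {T s : ℝ} (hT : 0 ≤ T) (hs : T ≤ s) :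
    min (1 - a) (r a T) ≤ r a s ∧ r a s ≤ max (1 - a) (r a T) := by
  have h2 := inv_base_mono hT hs
  have h3 := (inv_base_pos s).le
  rcases le_total 0 a with h | h
  · exact ⟨le_trans (min_le_left _ _) (by simp only [r]; nlinarith),
      le_trans (by simp only [r]; nlinarith) (le_max_right _ _)⟩
  · exact ⟨le_trans (min_le_right _ _) (by simp only [r]; nlinarith),
      le_trans (by simp only [r]; nlinarith) (le_max_left _ _)⟩

lemma integral_g_bounds {T t c d : ℝ} (hTt : T ≤ t)
    (h : ∀ s ∈ Set.Icc T t, c ≤ r a s ∧ r a s ≤ d) :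
    c * ∫ s in T..t, f a s ≤ (∫ s in T..t, g a s) ∧
    (∫ s in T..t, g a s) ≤ d * ∫ s in T..t, f a s := by
  constructor
  · rw [← intervalIntegral.integral_const_mul]
    apply intervalIntegral.integral_mono_on hTt
      ((continuous_const.mul f_cont).intervalIntegrable _ _) (g_cont.intervalIntegrable _ _)
    intro s hs
    rw [g_eq]
    exact mul_le_mul_of_nonneg_right (h s hs).1 (f_pos s).le
  · rw [← intervalIntegral.integral_const_mul]
    apply intervalIntegral.integral_mono_on hTt
      (g_cont.intervalIntegrable _ _) ((continuous_const.mul f_cont).intervalIntegrable _ _)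
    intro s hs
    rw [g_eq]
    exact mul_le_mul_of_nonneg_right (h s hs).2 (f_pos s).le

lemma psi_bounds {t c d : ℝ} (ht : 0 < t)
    (h : ∀ s ∈ Set.Icc 0 t, c ≤ r a s ∧ r a s ≤ d) :
    c ≤ t * (1 + t ^ 2) ^ (-a / 2) / F a t ∧
    t * (1 + t ^ 2) ^ (-a / 2) / F a t ≤ d := by
  have hF : 0 < F a t := F_pos ht
  have hb := integral_g_bounds (a := a) ht.le h
  rw [← G_eq] at hb
  constructor
  · rw [le_div_iff₀ hF]; exact hb.1
  · rw [div_le_iff₀ hF]; exact hb.2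

lemma tendsto_psi_zero :
    Tendsto (fun t : ℝ => t * (1 + t ^ 2) ^ (-a / 2) / F a t)
      (nhdsWithin 0 (Set.Ioi 0)) (nhds 1) := by
  have hr : Tendsto (r a) (nhdsWithin 0 (Set.Ioi 0)) (nhds 1) := by
    have h0 : r a 0 = 1 := by simp [r]
    have := (r_cont (a := a)).tendsto 0
    rw [h0] at this
    exact this.mono_left nhdsWithin_le_nhds
  have hlo : Tendsto (fun t => min 1 (r a t)) (nhdsWithin 0 (Set.Ioi 0)) (nhds 1) := by
    have := (tendsto_const_nhds (x := (1:ℝ))).min hr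
    simpa using this
  have hhi : Tendsto (fun t => max 1 (r a t)) (nhdsWithin 0 (Set.Ioi 0)) (nhds 1) := by
    have := (tendsto_const_nhds (x := (1:ℝ))).max hr
    simpa using this
  apply tendsto_of_tendsto_of_tendsto_of_le_of_le' hlo hhi
  · filter_upwards [self_mem_nhdsWithin] with t ht
    exact (psi_bounds ht (fun s hs => r_near hs.1 hs.2)).1
  · filter_upwards [self_mem_nhdsWithin] with t ht
    exact (psi_bounds ht (fun s hs => r_near hs.1 hs.2)).2

lemma F_ge_log (ha : a < 1) {t : ℝ} (ht : 0 ≤ t) : Real.log (1 + t) ≤ F a t := by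
  have hcont : ContinuousOn (fun s : ℝ => (1 + s)⁻¹) (Set.Icc 0 t) := by
    apply ContinuousOn.inv₀ (by fun_prop)
    intro s hs
    have := hs.1
    positivity
  have hint : IntervalIntegrable (fun s : ℝ => (1 + s)⁻¹) volume 0 t := by
    apply ContinuousOn.intervalIntegrable
    rwa [Set.uIcc_of_le ht]
  have hlog : Real.log (1 + t) = ∫ s in (0:ℝ)..t, (1 + s)⁻¹ := by
    have h := intervalIntegral.integral_eq_sub_of_hasDerivAt
      (f := fun x : ℝ => Real.log (1 + x)) (a := 0) (b := t) ?_ hint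
    · rw [h]; norm_num
    · intro s hs
      rw [Set.uIcc_of_le ht] at hs
      have h1 : (0:ℝ) < 1 + s := by have := hs.1; linarith
      have := (((hasDerivAt_id s).const_add 1).log h1.ne')
      simpa using this
  rw [hlog]
  apply intervalIntegral.integral_mono_on ht hint (f_cont.intervalIntegrable _ _)
  intro s hs
  have hs0 : 0 ≤ s := hs.1
  have h1 : (0:ℝ) < 1 + s := by linarith
  have hsq : Real.sqrt (1 + s ^ 2) ≤ 1 + s := by
    rw [show (1:ℝ) + s = Real.sqrt ((1 + s) ^ 2) by rw [Real.sqrt_sq (by linarith)]]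
    apply Real.sqrt_le_sqrt
    nlinarith
  have hsqpos : 0 < Real.sqrt (1 + s ^ 2) := Real.sqrt_pos.mpr (base_pos s)
  have step1 : (1 + s)⁻¹ ≤ (1 + s ^ 2) ^ (-(1:ℝ)/2) := by
    rw [show (-(1:ℝ)/2) = -(1/2) by norm_num, Real.rpow_neg (base_pos s).le,
      ← Real.sqrt_eq_rpow]
    exact inv_anti₀ hsqpos hsq
  have step2 : (1 + s ^ 2) ^ (-(1:ℝ)/2) ≤ f a s := by
    apply Real.rpow_le_rpow_of_exponent_le (by nlinarith [sq_nonneg s])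
    linarith
  exact step1.trans step2

lemma F_top (ha : a < 1) : Tendsto (F a) atTop atTop := by
  refine tendsto_atTop_mono' atTop ?_
    (Real.tendsto_log_atTop.comp (tendsto_atTop_add_const_left _ 1 tendsto_id))
  filter_upwards [eventually_ge_atTop (0:ℝ)] with t ht
  exact F_ge_log ha ht

set_option maxHeartbeats 1000000 in
lemma tendsto_psi_top (ha : a < 1) :
    Tendsto (fun t : ℝ => t * (1 + t ^ 2) ^ (-a / 2) / F a t) atTop (nhds (1 - a)) := by
  have hrtop : Tendsto (r a) atTop (nhds (1 - a)) := by
    have h1 : Tendsto (fun s : ℝ => (1 + s ^ 2)⁻¹) atTop (nhds 0) := by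
      apply Filter.Tendsto.comp tendsto_inv_atTop_zero
      exact tendsto_atTop_add_const_left _ 1 (tendsto_pow_atTop (by norm_num))
    have := ((tendsto_const_nhds (x := (1 - a))).add
      ((tendsto_const_nhds (x := a)).mul h1))
    show Tendsto (fun s => (1 - a) + a * (1 + s ^ 2)⁻¹) atTop _
    simpa using this
  rw [Metric.tendsto_atTop]
  intro ε hε
  obtain ⟨T₀, hT₀⟩ := (Metric.tendsto_atTop.mp hrtop) (ε / 2) (by linarith)
  set T := max T₀ 1 with hTdef
  have hT1 : (1:ℝ) ≤ T := le_max_right _ _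
  have hTpos : (0:ℝ) < T := lt_of_lt_of_le one_pos hT1
  have hrT : |r a T - (1 - a)| < ε / 2 := by
    have := hT₀ T (le_max_left _ _); rwa [Real.dist_eq] at this
  obtain ⟨hrT1, hrT2⟩ := abs_lt.mp hrT
  set c := min (1 - a) (r a T) with hcdef
  set d := max (1 - a) (r a T) with hddef
  have hd_le : d ≤ (1 - a) + ε / 2 := max_le (by linarith) (by linarith)
  have hc_ge : (1 - a) - ε / 2 ≤ c := le_min (by linarith) (by linarith)
  have hd_pos : (0:ℝ) < d := lt_of_lt_of_le (by linarith) (le_max_left _ _)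
  set GT := T * (1 + T ^ 2) ^ (-a / 2) with hGTdef
  have hGT0 : 0 < GT := mul_pos hTpos (Real.rpow_pos_of_pos (base_pos T) _)
  have hFT0 : 0 ≤ F a T := F_nonneg hTpos.le
  set B := GT + |c| * F a T + 1 with hBdef
  have hB0 : 0 < B := by positivity
  obtain ⟨N₀, hN₀⟩ := Filter.eventually_atTop.mp ((F_top ha).eventually_ge_atTop (2 * B / ε))
  refine ⟨max N₀ T, fun t ht => ?_⟩
  have htT : T ≤ t := le_trans (le_max_right _ _) ht
  have htpos : 0 < t := lt_of_lt_of_le hTpos htT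
  have hFt : 0 < F a t := F_pos htpos
  have hFtB : 2 * B / ε ≤ F a t := hN₀ t (le_trans (le_max_left _ _) ht)
  have hFtB' : 2 * B ≤ ε * F a t := by
    rw [div_le_iff₀ hε] at hFtB; linarith
  have hsplit : F a t = F a T + ∫ s in T..t, f a s := by
    simp only [F]
    rw [← intervalIntegral.integral_add_adjacent_intervals
      (f_cont.intervalIntegrable 0 T) (f_cont.intervalIntegrable T t)]
  have hGsplit : t * (1 + t ^ 2) ^ (-a / 2) = GT + ∫ s in T..t, g a s := by
    rw [G_eq (a := a) t, hGTdef, G_eq (a := a) T,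
      ← intervalIntegral.integral_add_adjacent_intervals
      (g_cont.intervalIntegrable 0 T) (g_cont.intervalIntegrable T t)]
  have hbounds := integral_g_bounds (a := a) htT (fun s hs => r_tail hTpos.le hs.1)
  set I := ∫ s in T..t, f a s with hIdef
  set J := ∫ s in T..t, g a s with hJdef
  have hI0 : 0 ≤ I :=
    intervalIntegral.integral_nonneg htT (fun s _ => (f_pos s).le)
  have h1 : c * I ≤ J := hbounds.1
  have h2 : J ≤ d * I := hbounds.2
  have hI : I = F a t - F a T := by rw [hsplit]; ring
  have habs1 : c * F a T ≤ |c| * F a T :=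
    mul_le_mul_of_nonneg_right (le_abs_self c) hFT0
  have hcFt : ((1 - a) - ε / 2) * F a t ≤ c * F a t :=
    mul_le_mul_of_nonneg_right hc_ge hFt.le
  have hdFt : d * F a t ≤ ((1 - a) + ε / 2) * F a t :=
    mul_le_mul_of_nonneg_right hd_le hFt.le
  have hdFT : 0 ≤ d * F a T := mul_nonneg hd_pos.le hFT0
  have hhigh : t * (1 + t ^ 2) ^ (-a / 2) < ((1 - a) + ε) * F a t := by
    rw [hGsplit]
    nlinarith [abs_nonneg c]
  have hlow : ((1 - a) - ε) * F a t < t * (1 + t ^ 2) ^ (-a / 2) := by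
    rw [hGsplit]
    nlinarith
  have hpsi1 : (1 - a) - ε < t * (1 + t ^ 2) ^ (-a / 2) / F a t :=
    (lt_div_iff₀ hFt).mpr hlow
  have hpsi2 : t * (1 + t ^ 2) ^ (-a / 2) / F a t < (1 - a) + ε :=
    (div_lt_iff₀ hFt).mpr hhigh
  rw [Real.dist_eq, abs_lt]
  exact ⟨by linarith, by linarith⟩

end Stmt0Aux

end Stmt0Aux

theorem stmt_0 (a : ℝ) (ha : a < 1) :
    IsGLB ((fun t : ℝ => t * (1 + t ^ 2) ^ (-a / 2) / ∫ s in (0:ℝ)..t, (1 + s ^ 2) ^ (-a / 2)) '' Set.Ioi 0) (min 1 (1 - a)) ∧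
    IsLUB ((fun t : ℝ => t * (1 + t ^ 2) ^ (-a / 2) / ∫ s in (0:ℝ)..t, (1 + s ^ 2) ^ (-a / 2)) '' Set.Ioi 0) (max 1 (1 - a)) := by
  have hEq : (fun t : ℝ => t * (1 + t ^ 2) ^ (-a / 2) / ∫ s in (0:ℝ)..t, (1 + s ^ 2) ^ (-a / 2))
      = fun t : ℝ => t * (1 + t ^ 2) ^ (-a / 2) / Stmt0Aux.F a t := rfl
  rw [hEq]
  set ψ := fun t : ℝ => t * (1 + t ^ 2) ^ (-a / 2) / Stmt0Aux.F a t with hψ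
  have hglob : ∀ t : ℝ, t ∈ Set.Ioi (0:ℝ) → min 1 (1 - a) ≤ ψ t ∧ ψ t ≤ max 1 (1 - a) :=
    fun t ht => Stmt0Aux.psi_bounds ht (fun s _ => Stmt0Aux.r_global ha s)
  have hmemS : ∀ t : ℝ, t ∈ Set.Ioi (0:ℝ) → ψ t ∈ ψ '' Set.Ioi 0 := fun t ht => ⟨t, ht, rfl⟩
  have h0 : Filter.Tendsto ψ (nhdsWithin 0 (Set.Ioi 0)) (nhds 1) := Stmt0Aux.tendsto_psi_zero
  have htop : Filter.Tendsto ψ Filter.atTop (nhds (1 - a)) := Stmt0Aux.tendsto_psi_top ha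
  constructor
  · constructor
    · rintro y ⟨t, ht, rfl⟩
      exact (hglob t ht).1
    · intro b hb
      have h1 : b ≤ 1 := by
        apply ge_of_tendsto h0
        filter_upwards [self_mem_nhdsWithin] with t ht
        exact hb (hmemS t ht)
      have h2 : b ≤ 1 - a := by
        apply ge_of_tendsto htop
        filter_upwards [Filter.eventually_gt_atTop (0:ℝ)] with t ht
        exact hb (hmemS t ht)
      exact le_min h1 h2
  · constructor
    · rintro y ⟨t, ht, rfl⟩
      exact (hglob t ht).2
    · intro b hb
      have h1 : 1 ≤ b := by
        apply le_of_tendsto h0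
        filter_upwards [self_mem_nhdsWithin] with t ht
        exact hb (hmemS t ht)
      have h2 : 1 - a ≤ b := by
        apply le_of_tendsto htop
        filter_upwards [Filter.eventually_gt_atTop (0:ℝ)] with t ht
        exact hb (hmemS t ht)
      exact max_le h1 h2
end

section
/- For a < 0, the function ψ(t) = t(1+t²)^{-a/2} / ∫₀ᵗ (1+s²)^{-a/2} ds is monotone nondecreasing on (0,∞); for a ∈ (0,1) it is monotone nonincreasing on (0,∞). -/
open MeasureTheory Real Set

noncomputable def cfun (a t : ℝ) : ℝ := (1 + t ^ 2) ^ (-a / 2)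
noncomputable def gfun (a t : ℝ) : ℝ := ∫ s in (0:ℝ)..t, (1 + s ^ 2) ^ (-a / 2)
noncomputable def ffun (a t : ℝ) : ℝ := t * (1 + t ^ 2) ^ (-a / 2)
noncomputable def Rfun (a t : ℝ) : ℝ := t * (1 + t ^ 2) ^ (1 - a / 2) / (1 + (1 - a) * t ^ 2)
noncomputable def fder (a t : ℝ) : ℝ := (1 + (1 - a) * t ^ 2) * (1 + t ^ 2) ^ (-a / 2 - 1)
noncomputable def Rder (a t : ℝ) : ℝ :=
  (1 + t ^ 2) ^ (-a / 2) * (1 + 2 * t ^ 2 + (1 - a) ^ 2 * t ^ 4) / (1 + (1 - a) * t ^ 2) ^ 2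

lemma base_pos (t : ℝ) : (0:ℝ) < 1 + t ^ 2 := by positivity

lemma cfun_pos (a t : ℝ) : 0 < cfun a t := Real.rpow_pos_of_pos (base_pos t) _

lemma cfun_cont (a : ℝ) : Continuous fun t : ℝ => (1 + t ^ 2) ^ (-a / 2) := by
  apply Continuous.rpow_const (by continuity)
  intro t; exact Or.inl (ne_of_gt (base_pos t))

lemma gfun_hasDeriv (a t : ℝ) : HasDerivAt (gfun a) (cfun a t) t :=
  ((cfun_cont a).integral_hasStrictDerivAt 0 t).hasDerivAt

lemma gfun_pos (a : ℝ) {t : ℝ} (ht : 0 < t) : 0 < gfun a t := by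
  apply intervalIntegral.intervalIntegral_pos_of_pos_on
  · exact (cfun_cont a).intervalIntegrable 0 t
  · intro s _; exact Real.rpow_pos_of_pos (base_pos s) _
  · exact ht

lemma pow_hasDeriv (p t : ℝ) :
    HasDerivAt (fun t : ℝ => (1 + t ^ 2) ^ p) (2 * t * p * (1 + t ^ 2) ^ (p - 1)) t := by
  have h := (((hasDerivAt_pow 2 t).const_add 1)).rpow_const (p := p) (Or.inl (base_pos t).ne')
  convert h using 1
  simp

lemma rpow_shift (t p : ℝ) : (1 + t ^ 2 : ℝ) ^ (p + 1) = (1 + t ^ 2) * (1 + t ^ 2) ^ p := by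
  rw [Real.rpow_add (base_pos t), Real.rpow_one]; ring

lemma vpos {a : ℝ} (ha : a < 1) (t : ℝ) : (0:ℝ) < 1 + (1 - a) * t ^ 2 := by nlinarith [sq_nonneg t]

lemma ffun_hasDeriv (a t : ℝ) : HasDerivAt (ffun a) (fder a t) t := by
  have h := (hasDerivAt_id t).mul (pow_hasDeriv (-a / 2) t)
  have key := rpow_shift t (-a / 2 - 1)
  rw [show (-a/2 - 1 + 1 : ℝ) = -a/2 by ring] at key
  rw [show (-a/2 - 1 : ℝ) = -a/2 - 1 by ring] at key
  refine h.congr_deriv ?_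
  unfold fder
  rw [key]
  simp only [id_eq]
  ring

lemma Rfun_hasDeriv {a : ℝ} (ha : a < 1) (t : ℝ) : HasDerivAt (Rfun a) (Rder a t) t := by
  have hu := (hasDerivAt_id t).mul (pow_hasDeriv (1 - a / 2) t)
  have hv : HasDerivAt (fun t : ℝ => 1 + (1 - a) * t ^ 2) (2 * (1 - a) * t) t := by
    have h := ((hasDerivAt_pow 2 t).const_mul (1 - a)).const_add 1
    refine h.congr_deriv ?_
    simp
    ring
  have h := hu.div hv (vpos ha t).ne'
  have key := rpow_shift t (-a / 2)
  rw [show (-a/2 + 1 : ℝ) = 1 - a/2 by ring] at key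
  rw [show (1 - a/2 - 1 : ℝ) = -a/2 by ring] at h
  rw [key] at h
  refine h.congr_deriv ?_
  unfold Rder
  congr 1
  simp only [id_eq, Pi.mul_apply, key]
  ring

lemma key_compare {a : ℝ} (ha : a < 1) :
    (a < 0 → ∀ t, 0 ≤ t → Rfun a t ≤ gfun a t) ∧
    (0 < a → ∀ t, 0 ≤ t → gfun a t ≤ Rfun a t) := by
  have hD : ∀ t, HasDerivAt (fun t => gfun a t - Rfun a t) (cfun a t - Rder a t) t :=
    fun t => (gfun_hasDeriv a t).sub (Rfun_hasDeriv ha t)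
  have hcont : Continuous (fun t => gfun a t - Rfun a t) :=
    continuous_iff_continuousAt.2 fun t => (hD t).differentiableAt.continuousAt
  have hdiff : ∀ s : Set ℝ, DifferentiableOn ℝ (fun t => gfun a t - Rfun a t) s :=
    fun s t _ => (hD t).differentiableAt.differentiableWithinAt
  have hzero : gfun a 0 - Rfun a 0 = 0 := by simp [gfun, Rfun]
  have hderiv : ∀ t, cfun a t - Rder a t
      = cfun a t * (-(2 * a) * t ^ 2) / (1 + (1 - a) * t ^ 2) ^ 2 := by
    intro t
    have hv := (vpos ha t).ne'
    unfold cfun Rder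
    rw [eq_div_iff (by positivity), sub_mul, div_mul_cancel₀ _ (by positivity)]
    ring
  constructor
  · intro ha0 t ht
    have mono : MonotoneOn (fun t => gfun a t - Rfun a t) (Ici 0) :=
      monotoneOn_of_deriv_nonneg (convex_Ici 0) hcont.continuousOn (hdiff _)
        (fun x _ => by
          rw [(hD x).deriv, hderiv x]
          have := vpos ha x
          have := cfun_pos a x
          apply div_nonneg
          · exact mul_nonneg this.le (by nlinarith)
          · positivity)
    have := mono (self_mem_Ici) ht ht
    change gfun a 0 - Rfun a 0 <= gfun a t - Rfun a t at this
    rw [hzero] at this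
    linarith
  · intro ha0 t ht
    have mono : AntitoneOn (fun t => gfun a t - Rfun a t) (Ici 0) :=
      antitoneOn_of_deriv_nonpos (convex_Ici 0) hcont.continuousOn (hdiff _)
        (fun x _ => by
          rw [(hD x).deriv, hderiv x]
          apply div_nonpos_of_nonpos_of_nonneg
          · apply mul_nonpos_of_nonneg_of_nonpos (cfun_pos a x).le
            nlinarith [sq_nonneg x]
          · positivity)
    have := mono (self_mem_Ici) ht ht
    change gfun a t - Rfun a t <= gfun a 0 - Rfun a 0 at this
    rw [hzero] at this
    linarith

lemma fcR_eq {a : ℝ} (ha : a < 1) (t : ℝ) : ffun a t * cfun a t = fder a t * Rfun a t := by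
  have h1 : (1+t^2:ℝ)^(-a/2) * (1+t^2)^(-a/2) = (1+t^2)^(-a/2-1) * (1+t^2)^(1-a/2) := by
    rw [← Real.rpow_add (base_pos t), ← Real.rpow_add (base_pos t)]
    ring_nf
  unfold ffun cfun fder Rfun
  rw [mul_div_assoc', eq_div_iff (vpos ha t).ne']
  linear_combination (t * (1 + (1 - a) * t ^ 2)) * h1

lemma fder_pos {a : ℝ} (ha : a < 1) (t : ℝ) : 0 < fder a t :=
  mul_pos (vpos ha t) (Real.rpow_pos_of_pos (base_pos t) _)

theorem stmt_2 (a : ℝ) (ha : a < 1) :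
    (a < 0 → MonotoneOn (fun t : ℝ => t * (1 + t ^ 2) ^ (-a / 2) / ∫ s in (0:ℝ)..t, (1 + s ^ 2) ^ (-a / 2)) (Set.Ioi 0)) ∧
    (0 < a → AntitoneOn (fun t : ℝ => t * (1 + t ^ 2) ^ (-a / 2) / ∫ s in (0:ℝ)..t, (1 + s ^ 2) ^ (-a / 2)) (Set.Ioi 0)) := by
  have hψ : ∀ t : ℝ, t ∈ Set.Ioi (0:ℝ) →
      HasDerivAt (fun t => ffun a t / gfun a t)
        ((fder a t * gfun a t - ffun a t * cfun a t) / (gfun a t) ^ 2) t :=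
    fun t ht => (ffun_hasDeriv a t).div (gfun_hasDeriv a t) (gfun_pos a ht).ne'
  have hcont : ContinuousOn (fun t => ffun a t / gfun a t) (Set.Ioi 0) :=
    fun t ht => ((hψ t ht).differentiableAt.continuousAt).continuousWithinAt
  have hdiff : DifferentiableOn ℝ (fun t => ffun a t / gfun a t) (interior (Set.Ioi 0)) := by
    rw [interior_Ioi]
    exact fun t ht => (hψ t ht).differentiableAt.differentiableWithinAt
  constructor
  · intro ha0
    show MonotoneOn (fun t : ℝ => ffun a t / gfun a t) (Set.Ioi 0)
    apply monotoneOn_of_deriv_nonneg (convex_Ioi 0) hcont hdiff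
    rw [interior_Ioi]
    intro t ht
    rw [(hψ t ht).deriv]
    apply div_nonneg _ (sq_nonneg _)
    rw [fcR_eq ha t, ← mul_sub]
    exact mul_nonneg (fder_pos ha t).le
      (sub_nonneg.2 ((key_compare ha).1 ha0 t (le_of_lt ht)))
  · intro ha0
    show AntitoneOn (fun t : ℝ => ffun a t / gfun a t) (Set.Ioi 0)
    apply antitoneOn_of_deriv_nonpos (convex_Ioi 0) hcont hdiff
    rw [interior_Ioi]
    intro t ht
    rw [(hψ t ht).deriv]
    apply div_nonpos_of_nonpos_of_nonneg _ (sq_nonneg _)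
    rw [fcR_eq ha t, ← mul_sub]
    exact mul_nonpos_of_nonneg_of_nonpos (fder_pos ha t).le
      (sub_nonpos.2 ((key_compare ha).2 ha0 t (le_of_lt ht)))
end

section
/- For a ∈ (-3, 1), the value g_a(1) = 2^{1-a/2} + a∫₀¹(1+s²)^{-a/2} ds is strictly positive. -/
open MeasureTheory

theorem stmt_8 (a : ℝ) (h1 : -3 < a) (h2 : a < 1) :
    0 < (2 : ℝ) ^ (1 - a / 2) + a * ∫ s in (0:ℝ)..1, (1 + s ^ 2) ^ (-a / 2) := by
  have hB0 : (0:ℝ) < (2:ℝ) ^ (1 - a / 2) := Real.rpow_pos_of_pos (by norm_num) _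
  rcases le_or_gt 0 a with ha | ha
  · -- a ≥ 0 : integral is nonneg
    have hI : 0 ≤ ∫ s in (0:ℝ)..1, (1 + s ^ 2) ^ (-a / 2) := by
      apply intervalIntegral.integral_nonneg (by norm_num)
      intro x hx
      exact Real.rpow_nonneg (by nlinarith) _
    nlinarith [mul_nonneg ha hI]
  · -- a < 0
    set p : ℝ := -a / 2 with hpdef
    have hp : 0 < p := by simp [hpdef]; linarith
    have hq : 1 - a / 2 = p + 1 := by simp [hpdef]; ring
    -- integral comparison
    have hc1 : Continuous fun s : ℝ => (1 + s ^ 2) ^ p := by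
      apply Continuous.rpow_const (by continuity)
      intro x; left; positivity
    have hc2 : ContinuousOn (fun s : ℝ => (1 + s) ^ p) (Set.uIcc (0:ℝ) 1) := by
      apply ContinuousOn.rpow_const (by fun_prop)
      intro x hx
      left
      rw [Set.uIcc_of_le (by norm_num : (0:ℝ) ≤ 1)] at hx
      have := hx.1
      positivity
    have hmono : (∫ s in (0:ℝ)..1, (1 + s ^ 2) ^ p) ≤ ∫ s in (0:ℝ)..1, (1 + s) ^ p := by
      apply intervalIntegral.integral_mono_on (by norm_num)
      · exact hc1.intervalIntegrable 0 1
      · exact hc2.intervalIntegrable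
      · intro x hx
        apply Real.rpow_le_rpow (by nlinarith [hx.1]) (by nlinarith [hx.1, hx.2]) hp.le
    -- value of comparison integral
    have hval : (∫ s in (0:ℝ)..1, (1 + s) ^ p) = ((2:ℝ) ^ (p + 1) - 1) / (p + 1) := by
      have h1' : (∫ s in (0:ℝ)..1, (1 + s) ^ p) = ∫ s in (1:ℝ)..2, s ^ p := by
        have := intervalIntegral.integral_comp_add_left (a := (0:ℝ)) (b := 1)
          (fun s : ℝ => s ^ p) 1
        rw [show (2:ℝ) = 1 + 1 by norm_num]
        simpa using this
      rw [h1', integral_rpow (Or.inl (by linarith)), Real.one_rpow]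
    set B : ℝ := (2:ℝ) ^ (p + 1) with hBdef
    -- bound B ≤ 6
    have hBle : B ≤ 6 := by
      have h52 : B ≤ (2:ℝ) ^ ((5:ℝ)/2) := by
        apply Real.rpow_le_rpow_left_iff (by norm_num : (1:ℝ) < 2) |>.2
        simp [hpdef]; linarith
      have hx0 : (0:ℝ) ≤ (2:ℝ) ^ ((5:ℝ)/2) := (Real.rpow_pos_of_pos (by norm_num) _).le
      have h32 : ((2:ℝ) ^ ((5:ℝ)/2)) ^ (2:ℕ) = 32 := by
        rw [← Real.rpow_natCast ((2:ℝ) ^ ((5:ℝ)/2)) 2, ← Real.rpow_mul (by norm_num)]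
        norm_num
      nlinarith [h32, hx0, h52]
    have hB0' : 0 < B := by rw [hq] at hB0; exact hB0
    -- main inequality
    have hnum : 0 < (p + 1) * B + a * (B - 1) := by
      have hpa : (p + 1) * B + a * (B - 1) = B * (1 + a / 2) - a := by
        simp [hpdef]; ring
      rw [hpa]
      nlinarith [mul_pos hB0' (show 0 < 6 + 2 * a by linarith),
        mul_nonneg (show 0 ≤ 6 - B by linarith) (show 0 ≤ -a by linarith)]
    have hkey : 0 < B + a * ((B - 1) / (p + 1)) := by
      have : B + a * ((B - 1) / (p + 1)) = ((p + 1) * B + a * (B - 1)) / (p + 1) := by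
        field_simp
      rw [this]
      exact div_pos hnum (by linarith)
    have hmul : a * (∫ s in (0:ℝ)..1, (1 + s ^ 2) ^ (-a / 2))
        ≥ a * ((B - 1) / (p + 1)) := by
      rw [← hval]
      exact mul_le_mul_of_nonpos_left hmono ha.le
    rw [hq]
    calc (0:ℝ) < B + a * ((B - 1) / (p + 1)) := hkey
      _ ≤ B + a * ∫ s in (0:ℝ)..1, (1 + s ^ 2) ^ (-a / 2) := by linarith [hmul]
end

section
/- For 0 ≤ a < 1, the function f_a(t) = a t²[(2-a)t² - 2] / (4(1+t²)²) on (0,∞) attains its minimum at t = 1/√(3-a), with minimum value a/(4(a-4)), and this value is strictly greater than -1/4. -/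
theorem stmt_9 (a : ℝ) (h0 : 0 ≤ a) (h1 : a < 1) :
    (∀ t : ℝ, 0 < t →
      a * (1 / Real.sqrt (3 - a)) ^ 2 * ((2 - a) * (1 / Real.sqrt (3 - a)) ^ 2 - 2) /
          (4 * (1 + (1 / Real.sqrt (3 - a)) ^ 2) ^ 2) ≤
        a * t ^ 2 * ((2 - a) * t ^ 2 - 2) / (4 * (1 + t ^ 2) ^ 2)) ∧
    a * (1 / Real.sqrt (3 - a)) ^ 2 * ((2 - a) * (1 / Real.sqrt (3 - a)) ^ 2 - 2) /
        (4 * (1 + (1 / Real.sqrt (3 - a)) ^ 2) ^ 2) = a / (4 * (a - 4)) ∧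
    -(1 / 4 : ℝ) < a / (4 * (a - 4)) := by
  have h3a : (0:ℝ) < 3 - a := by linarith
  have hsq : (1 / Real.sqrt (3 - a)) ^ 2 = 1 / (3 - a) := by
    rw [div_pow, one_pow, Real.sq_sqrt h3a.le]
  have heq : a * (1 / Real.sqrt (3 - a)) ^ 2 * ((2 - a) * (1 / Real.sqrt (3 - a)) ^ 2 - 2) /
      (4 * (1 + (1 / Real.sqrt (3 - a)) ^ 2) ^ 2) = a / (4 * (a - 4)) := by
    rw [hsq]
    have h4 : a - 4 ≠ 0 := by linarith
    have h3 : (3 : ℝ) - a ≠ 0 := by linarith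
    field_simp
    ring
  refine ⟨?_, heq, ?_⟩
  · intro t ht
    rw [heq, show a / (4 * (a - 4)) = (-a) / (4 * (4 - a)) by
      rw [div_eq_div_iff (by nlinarith) (by nlinarith)]; ring]
    rw [div_le_div_iff₀ (by nlinarith) (by positivity)]
    nlinarith [sq_nonneg ((3 - a) * t ^ 2 - 1), mul_nonneg h0 (sq_nonneg ((3 - a) * t ^ 2 - 1))]
  · rw [lt_div_iff_of_neg (by nlinarith : 4 * (a - 4) < 0)]
    linarith
end

section
/- For a < 0, the function f_a(t) = a t²[(2-a)t² - 2]/(4(1+t²)²) satisfies inf_{t>0} f_a(t) = lim_{t→+∞} f_a(t) = a(2-a)/4, and f_a(t) ≥ 0 for t ∈ (0, √(2/(2-a))]. -/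
theorem stmt_10 (a : ℝ) (ha : a < 0) :
    IsGLB ((fun t : ℝ => a * t ^ 2 * ((2 - a) * t ^ 2 - 2) / (4 * (1 + t ^ 2) ^ 2)) ''
        Set.Ioi 0) (a * (2 - a) / 4) ∧
    Filter.Tendsto (fun t : ℝ => a * t ^ 2 * ((2 - a) * t ^ 2 - 2) / (4 * (1 + t ^ 2) ^ 2))
      Filter.atTop (nhds (a * (2 - a) / 4)) ∧
    (∀ t : ℝ, 0 < t → t ≤ Real.sqrt (2 / (2 - a)) →
      0 ≤ a * t ^ 2 * ((2 - a) * t ^ 2 - 2) / (4 * (1 + t ^ 2) ^ 2)) := by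
  have h2a : (0:ℝ) < 2 - a := by linarith
  set f : ℝ → ℝ := fun t : ℝ => a * t ^ 2 * ((2 - a) * t ^ 2 - 2) / (4 * (1 + t ^ 2) ^ 2) with hf
  -- lower bound
  have hlb : ∀ t : ℝ, 0 < t → a * (2 - a) / 4 ≤ f t := by
    intro t ht
    rw [hf]
    rw [div_le_div_iff₀ (by norm_num) (by positivity)]
    nlinarith [sq_nonneg t, sq_nonneg a, mul_nonneg (neg_nonneg.mpr ha.le) (sq_nonneg t)]
  -- limit
  have htend : Filter.Tendsto f Filter.atTop (nhds (a * (2 - a) / 4)) := by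
    have hg : Filter.Tendsto (fun u : ℝ => (a * (2 - a) - 2 * a * u) / (4 * (u + 1) ^ 2))
        (nhds 0) (nhds (a * (2 - a) / 4)) := by
      have : ContinuousAt (fun u : ℝ => (a * (2 - a) - 2 * a * u) / (4 * (u + 1) ^ 2)) 0 := by
        apply ContinuousAt.div (by fun_prop) (by fun_prop)
        norm_num
      simpa using this.tendsto
    have hu : Filter.Tendsto (fun t : ℝ => (t ^ 2)⁻¹) Filter.atTop (nhds 0) := by
      have h0 : Filter.Tendsto (fun t : ℝ => t⁻¹) Filter.atTop (nhds 0) :=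
        tendsto_inv_atTop_zero
      have := h0.pow 2
      simpa using this
    have := hg.comp hu
    apply this.congr'
    filter_upwards [Filter.eventually_gt_atTop (0:ℝ)] with t ht
    have ht' : t ≠ 0 := ne_of_gt ht
    show (a * (2 - a) - 2 * a * (t ^ 2)⁻¹) / (4 * ((t ^ 2)⁻¹ + 1) ^ 2) = f t
    rw [hf]
    field_simp
  refine ⟨⟨?_, ?_⟩, htend, ?_⟩
  · rintro x ⟨t, ht, rfl⟩
    exact hlb t ht
  · intro b hb
    refine ge_of_tendsto htend ?_
    filter_upwards [Filter.eventually_gt_atTop (0:ℝ)] with t ht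
    exact hb ⟨t, ht, rfl⟩
  · intro t ht hts
    have hsq : t ^ 2 ≤ 2 / (2 - a) := by
      exact (Real.le_sqrt ht.le (by positivity)).mp hts
    have h1 : (2 - a) * t ^ 2 - 2 ≤ 0 := by
      have := (le_div_iff₀ h2a).mp hsq
      linarith
    apply div_nonneg _ (by positivity)
    have : a * t ^ 2 ≤ 0 := mul_nonpos_of_nonpos_of_nonneg (le_of_lt ha) (sq_nonneg t)
    nlinarith [mul_nonneg (neg_nonneg.mpr this) (neg_nonneg.mpr h1)]
end

section
/- The function v(t) = e^{t²/2} / (t ∫₀ᵗ e^{s²/2} ds) satisfies v(t) > 1 − 2/t² for all t > 0. -/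
open MeasureTheory

noncomputable def Dfun : ℝ → ℝ := fun t =>
  Real.exp (t ^ 2 / 2) * (t ^ 2 + 2) / t ^ 3 - ∫ s in (0:ℝ)..t, Real.exp (s ^ 2 / 2)

lemma contE : Continuous (fun s : ℝ => Real.exp (s ^ 2 / 2)) := by continuity

/-- Chord bound: on `[a,b]` with `0 ≤ a`, `s² ≤ (a+b)s - ab`, hence
`∫ e^{s²/2} ≤ (2/(a+b))(e^{b²/2} - e^{a²/2})`. -/
lemma chord (a b : ℝ) (ha : 0 ≤ a) (hab : a < b) :
    (∫ s in a..b, Real.exp (s ^ 2 / 2)) ≤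
      2 / (a + b) * (Real.exp (b ^ 2 / 2) - Real.exp (a ^ 2 / 2)) := by
  have hab0 : 0 < a + b := by linarith
  have hmono : (∫ s in a..b, Real.exp (s ^ 2 / 2)) ≤
      ∫ s in a..b, Real.exp ((a + b) / 2 * s - a * b / 2) := by
    apply intervalIntegral.integral_mono_on hab.le
      (contE.intervalIntegrable _ _)
      ((Real.continuous_exp.comp (by continuity)).intervalIntegrable _ _)
    intro s hs
    apply Real.exp_le_exp.2
    nlinarith [hs.1, hs.2, mul_nonneg (sub_nonneg.2 hs.1) (sub_nonneg.2 hs.2)]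
  have hder : ∀ s ∈ Set.uIcc a b, HasDerivAt
      (fun u => 2 / (a + b) * Real.exp ((a + b) / 2 * u - a * b / 2))
      (Real.exp ((a + b) / 2 * s - a * b / 2)) s := by
    intro s _
    have h1 : HasDerivAt (fun u : ℝ => (a + b) / 2 * u - a * b / 2) ((a + b) / 2) s := by
      simpa using ((hasDerivAt_id s).const_mul ((a + b) / 2)).sub_const (a * b / 2)
    have h2 := (h1.exp).const_mul (2 / (a + b))
    refine h2.congr_deriv ?_
    field_simp
  have heq : (∫ s in a..b, Real.exp ((a + b) / 2 * s - a * b / 2)) =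
      2 / (a + b) * (Real.exp (b ^ 2 / 2) - Real.exp (a ^ 2 / 2)) := by
    rw [intervalIntegral.integral_eq_sub_of_hasDerivAt hder
      ((Real.continuous_exp.comp (by continuity)).intervalIntegrable _ _)]
    have hb2 : (a + b) / 2 * b - a * b / 2 = b ^ 2 / 2 := by ring
    have ha2 : (a + b) / 2 * a - a * b / 2 = a ^ 2 / 2 := by ring
    rw [hb2, ha2]; ring
  linarith [hmono, heq.le, heq.ge]

lemma sqrt2_bounds : 1.414213 ≤ Real.sqrt 2 ∧ Real.sqrt 2 ≤ 1.4142136 := by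
  constructor
  · rw [show (1.414213:ℝ) = Real.sqrt (1.414213 ^ 2) by
      rw [Real.sqrt_sq (by norm_num)]]
    exact Real.sqrt_le_sqrt (by norm_num)
  · rw [show (1.4142136:ℝ) = Real.sqrt (1.4142136 ^ 2) by
      rw [Real.sqrt_sq (by norm_num)]]
    exact Real.sqrt_le_sqrt (by norm_num)

lemma sqrt6_bounds : 2.4494897 ≤ Real.sqrt 6 ∧ Real.sqrt 6 ≤ 2.4494898 := by
  constructor
  · rw [show (2.4494897:ℝ) = Real.sqrt (2.4494897 ^ 2) by
      rw [Real.sqrt_sq (by norm_num)]]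
    exact Real.sqrt_le_sqrt (by norm_num)
  · rw [show (2.4494898:ℝ) = Real.sqrt (2.4494898 ^ 2) by
      rw [Real.sqrt_sq (by norm_num)]]
    exact Real.sqrt_le_sqrt (by norm_num)

/-- Numerical fact: `∫₀^{√6} e^{s²/2} ds < (4/(3√6)) e³`. -/
lemma key_num : (∫ s in (0:ℝ)..Real.sqrt 6, Real.exp (s ^ 2 / 2)) <
    4 * Real.exp 3 / (3 * Real.sqrt 6) := by
  have h2 : (Real.sqrt 2) ^ 2 = 2 := Real.sq_sqrt (by norm_num)
  have h6 : (Real.sqrt 6) ^ 2 = 6 := Real.sq_sqrt (by norm_num)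
  obtain ⟨s2lo, s2hi⟩ := sqrt2_bounds
  obtain ⟨s6lo, s6hi⟩ := sqrt6_bounds
  have hsplit : (∫ s in (0:ℝ)..Real.sqrt 6, Real.exp (s ^ 2 / 2)) =
      (∫ s in (0:ℝ)..Real.sqrt 2, Real.exp (s ^ 2 / 2)) +
      (∫ s in (Real.sqrt 2)..(2:ℝ), Real.exp (s ^ 2 / 2)) +
      (∫ s in (2:ℝ)..Real.sqrt 6, Real.exp (s ^ 2 / 2)) := by
    rw [intervalIntegral.integral_add_adjacent_intervals
        (contE.intervalIntegrable _ _) (contE.intervalIntegrable _ _),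
      intervalIntegral.integral_add_adjacent_intervals
        (contE.intervalIntegrable _ _) (contE.intervalIntegrable _ _)]
  have hc1 := chord 0 (Real.sqrt 2) le_rfl (by linarith)
  have hc2 := chord (Real.sqrt 2) 2 (by linarith) (by linarith)
  have hc3 := chord 2 (Real.sqrt 6) (by norm_num) (by linarith)
  rw [show ((Real.sqrt 2) ^ 2 / 2 : ℝ) = 1 by rw [h2]; norm_num] at hc1 hc2
  rw [show ((Real.sqrt 6) ^ 2 / 2 : ℝ) = 3 by rw [h6]; norm_num] at hc3
  norm_num at hc1 hc2 hc3
  -- exp values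
  have e1lo : (2.7182818283:ℝ) < Real.exp 1 := Real.exp_one_gt_d9
  have e1hi : Real.exp 1 < 2.7182818286 := Real.exp_one_lt_d9
  have he2 : Real.exp 2 = Real.exp 1 * Real.exp 1 := by
    rw [← Real.exp_add]; norm_num
  have he3 : Real.exp 3 = Real.exp 1 * Real.exp 1 * Real.exp 1 := by
    rw [← Real.exp_add, ← Real.exp_add]; norm_num
  have h1pos : (0:ℝ) < Real.exp 1 := Real.exp_pos 1
  -- bound each chord value by rationals
  have b1 : Real.sqrt 2 * (Real.exp 1 - 1) ≤
      1.4142136 * (2.7182818286 - 1) := by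
    gcongr <;> linarith
  have b2 : 2 / (Real.sqrt 2 + 2) * (Real.exp 2 - Real.exp 1) ≤
      2 / (1.414213 + 2) * (2.7182818286 ^ 2 - 2.7182818283) := by
    have : Real.exp 2 - Real.exp 1 ≤ 2.7182818286 ^ 2 - 2.7182818283 := by
      rw [he2]; nlinarith
    have hpos : (0:ℝ) ≤ Real.exp 2 - Real.exp 1 := by
      rw [he2]; nlinarith
    gcongr <;> linarith
  have b3 : 2 / (2 + Real.sqrt 6) * (Real.exp 3 - Real.exp 2) ≤
      2 / (2 + 2.4494897) * (2.7182818286 ^ 3 - 2.7182818283 ^ 2) := by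
    have : Real.exp 3 - Real.exp 2 ≤ 2.7182818286 ^ 3 - 2.7182818283 ^ 2 := by
      rw [he2, he3]; nlinarith
    have hpos : (0:ℝ) ≤ Real.exp 3 - Real.exp 2 := by
      rw [he2, he3]; nlinarith
    gcongr <;> linarith
  have brhs : 4 * 2.7182818283 ^ 3 / (3 * 2.4494898) ≤
      4 * Real.exp 3 / (3 * Real.sqrt 6) := by
    have : (2.7182818283:ℝ) ^ 3 ≤ Real.exp 3 := by rw [he3]; nlinarith
    gcongr <;> linarith
  rw [hsplit]
  have final : 1.4142136 * (2.7182818286 - 1)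
      + 2 / (1.414213 + 2) * (2.7182818286 ^ 2 - 2.7182818283)
      + 2 / (2 + 2.4494897) * (2.7182818286 ^ 3 - 2.7182818283 ^ 2)
      < (4 * 2.7182818283 ^ 3 / (3 * 2.4494898) : ℝ) := by norm_num
  linarith

lemma Dfun_hasDeriv {t : ℝ} (ht : 0 < t) :
    HasDerivAt Dfun (Real.exp (t ^ 2 / 2) * (t ^ 2 - 6) / t ^ 4) t := by
  have h1 : HasDerivAt (fun u : ℝ => u ^ 2 / 2) t t := by
    have := (hasDerivAt_pow 2 t).div_const 2
    refine this.congr_deriv ?_; push_cast; ring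
  have h2 : HasDerivAt (fun u : ℝ => Real.exp (u ^ 2 / 2))
      (Real.exp (t ^ 2 / 2) * t) t := h1.exp
  have h3 : HasDerivAt (fun u : ℝ => Real.exp (u ^ 2 / 2) * (u ^ 2 + 2))
      (Real.exp (t ^ 2 / 2) * t * (t ^ 2 + 2) + Real.exp (t ^ 2 / 2) * (2 * t)) t := by
    have hp : HasDerivAt (fun u : ℝ => u ^ 2 + 2) (2 * t) t := by
      have := (hasDerivAt_pow 2 t).add_const (2:ℝ)
      refine this.congr_deriv ?_; push_cast; ring
    exact h2.mul hp
  have h4 := h3.div (hasDerivAt_pow 3 t) (pow_ne_zero 3 ht.ne')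
  have h5 : HasDerivAt (fun u : ℝ => ∫ s in (0:ℝ)..u, Real.exp (s ^ 2 / 2))
      (Real.exp (t ^ 2 / 2)) t :=
    (contE.integral_hasStrictDerivAt 0 t).hasDerivAt
  have h6 := h4.sub h5
  refine h6.congr_deriv ?_
  have ht3 : (t:ℝ) ^ 3 ≠ 0 := pow_ne_zero 3 ht.ne'
  field_simp
  ring

lemma Dfun_min {t : ℝ} (ht : 0 < t) : Dfun (Real.sqrt 6) ≤ Dfun t := by
  have h6 : (Real.sqrt 6) ^ 2 = 6 := Real.sq_sqrt (by norm_num)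
  have h6pos : 0 < Real.sqrt 6 := Real.sqrt_pos.2 (by norm_num)
  rcases le_total t (Real.sqrt 6) with hle | hge
  · rcases eq_or_lt_of_le hle with rfl | hlt
    · exact le_rfl
    have anti : StrictAntiOn Dfun (Set.Ioc 0 (Real.sqrt 6)) := by
      apply strictAntiOn_of_deriv_neg (convex_Ioc _ _)
      · intro x hx
        exact ((Dfun_hasDeriv hx.1).continuousAt).continuousWithinAt
      · intro x hx
        rw [interior_Ioc] at hx
        rw [(Dfun_hasDeriv hx.1).deriv]
        have hx6 : x ^ 2 < 6 := by nlinarith [hx.1, hx.2, h6]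
        have : Real.exp (x ^ 2 / 2) * (x ^ 2 - 6) < 0 :=
          mul_neg_of_pos_of_neg (Real.exp_pos _) (by linarith)
        exact div_neg_of_neg_of_pos this (pow_pos hx.1 4)
    exact (anti ⟨ht, hle⟩ ⟨h6pos, le_rfl⟩ hlt).le
  · rcases eq_or_lt_of_le hge with rfl | hlt
    · exact le_rfl
    have mono : StrictMonoOn Dfun (Set.Ici (Real.sqrt 6)) := by
      apply strictMonoOn_of_deriv_pos (convex_Ici _)
      · intro x hx
        have hx0 : 0 < x := lt_of_lt_of_le h6pos hx
        exact ((Dfun_hasDeriv hx0).continuousAt).continuousWithinAt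
      · intro x hx
        rw [interior_Ici] at hx
        have hx0 : 0 < x := lt_trans h6pos hx
        rw [(Dfun_hasDeriv hx0).deriv]
        have hxgt : Real.sqrt 6 < x := hx
        have hx6 : 6 < x ^ 2 := by nlinarith [h6, h6pos]
        have : 0 < Real.exp (x ^ 2 / 2) * (x ^ 2 - 6) :=
          mul_pos (Real.exp_pos _) (by linarith)
        exact div_pos this (pow_pos hx0 4)
    exact (mono (Set.mem_Ici.2 le_rfl) (Set.mem_Ici.2 hge) hlt).le

lemma int_lt {t : ℝ} (ht : 0 < t) :
    (∫ s in (0:ℝ)..t, Real.exp (s ^ 2 / 2)) <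
      Real.exp (t ^ 2 / 2) * (t ^ 2 + 2) / t ^ 3 := by
  have h6 : (Real.sqrt 6) ^ 2 = 6 := Real.sq_sqrt (by norm_num)
  have h6pos : 0 < Real.sqrt 6 := Real.sqrt_pos.2 (by norm_num)
  have hcube : (Real.sqrt 6) ^ 3 = 6 * Real.sqrt 6 := by
    rw [pow_succ, h6]
  have hDpos : 0 < Dfun (Real.sqrt 6) := by
    unfold Dfun
    rw [show ((Real.sqrt 6) ^ 2 / 2 : ℝ) = 3 by rw [h6]; norm_num, h6, hcube]
    have hk := key_num
    have heq : Real.exp 3 * (6 + 2) / (6 * Real.sqrt 6) =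
        4 * Real.exp 3 / (3 * Real.sqrt 6) := by
      rw [div_eq_div_iff (by positivity) (by positivity)]; ring
    rw [heq]
    linarith
  have h1 := Dfun_min ht
  have h2 : 0 < Dfun t := lt_of_lt_of_le hDpos h1
  unfold Dfun at h2
  linarith

theorem stmt_12 :
    ∀ t : ℝ, 0 < t →
      1 - 2 / t ^ 2 < Real.exp (t ^ 2 / 2) / (t * ∫ s in (0:ℝ)..t, Real.exp (s ^ 2 / 2)) := by
  intro t ht
  have hintpos : 0 < ∫ s in (0:ℝ)..t, Real.exp (s ^ 2 / 2) := by
    apply intervalIntegral.intervalIntegral_pos_of_pos_on (contE.intervalIntegrable _ _)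
    · intro x _; exact Real.exp_pos _
    · exact ht
  have hden : 0 < t * ∫ s in (0:ℝ)..t, Real.exp (s ^ 2 / 2) := mul_pos ht hintpos
  rw [lt_div_iff₀ hden]
  have hE : 0 < Real.exp (t ^ 2 / 2) := Real.exp_pos _
  have ht2 : (0:ℝ) < t ^ 2 := by positivity
  have ht3 : (0:ℝ) < t ^ 3 := by positivity
  set I := ∫ s in (0:ℝ)..t, Real.exp (s ^ 2 / 2) with hI
  rcases le_or_gt (t ^ 2) 2 with h | h
  · have h1 : 1 - 2 / t ^ 2 ≤ 0 := by
      rw [sub_nonpos, le_div_iff₀ ht2]; linarith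
    have : (1 - 2 / t ^ 2) * (t * I) ≤ 0 :=
      mul_nonpos_of_nonpos_of_nonneg h1 hden.le
    linarith
  · have hb : I < Real.exp (t ^ 2 / 2) * (t ^ 2 + 2) / t ^ 3 := int_lt ht
    have hb' : I * t ^ 3 < Real.exp (t ^ 2 / 2) * (t ^ 2 + 2) :=
      (lt_div_iff₀ ht3).1 hb
    have key2 : I * t * (t ^ 2 - 2) < Real.exp (t ^ 2 / 2) * t ^ 2 := by
      nlinarith [mul_lt_mul_of_pos_right hb' (show (0:ℝ) < t ^ 2 - 2 by linarith),
        mul_pos hE ht2, ht2]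
    have hrw : (1 - 2 / t ^ 2) * (t * I) = I * t * (t ^ 2 - 2) / t ^ 2 := by
      field_simp
    rw [hrw, div_lt_iff₀ ht2]
    linarith
end

section
/- For a < 0 and t > 0, one has the pointwise bound (1 + t²/(-a))^{-a/2+1} / (t ∫₀ᵗ (1 + s²/(-a))^{-a/2} ds) ≥ e^{t²/2} / (t ∫₀ᵗ e^{s²/2} ds), i.e. w_a(t) ≥ v(t) where w_a is the parameterized version of the ratio appearing in the super-singular spectral analysis. -/
open MeasureTheory Real Set

noncomputable def EE (t : ℝ) : ℝ := ∫ s in (0:ℝ)..t, Real.exp (s ^ 2 / 2)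

lemma contExp : Continuous fun s : ℝ => Real.exp (s ^ 2 / 2) := by fun_prop

lemma EE_hasDeriv (t : ℝ) : HasDerivAt EE (Real.exp (t ^ 2 / 2)) t :=
  intervalIntegral.integral_hasDerivAt_right (contExp.intervalIntegrable _ _)
    (contExp.stronglyMeasurableAtFilter _ _) contExp.continuousAt

lemma EE_pos {t : ℝ} (ht : 0 < t) : 0 < EE t :=
  intervalIntegral.intervalIntegral_pos_of_pos_on (contExp.intervalIntegrable _ _)
    (fun x _ => Real.exp_pos _) ht

lemma EE_le {t : ℝ} (ht : 0 < t) : EE t ≤ (2 / t) * (Real.exp (t ^ 2 / 2) - 1) := by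
  have h1 : EE t ≤ ∫ s in (0:ℝ)..t, Real.exp (t * s / 2) := by
    apply intervalIntegral.integral_mono_on ht.le (contExp.intervalIntegrable _ _)
      ((Continuous.intervalIntegrable (by fun_prop) _ _))
    intro x hx
    apply Real.exp_le_exp.2
    rcases hx with ⟨h0, hxt⟩
    nlinarith
  have h2 : (∫ s in (0:ℝ)..t, Real.exp (t * s / 2)) = (2/t) * Real.exp (t*t/2) - (2/t) := by
    have : ∀ s ∈ Set.uIcc (0:ℝ) t, HasDerivAt (fun s => (2/t) * Real.exp (t * s / 2))
        (Real.exp (t * s / 2)) s := by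
      intro s _
      have h := (((hasDerivAt_id s).const_mul t).div_const 2).exp.const_mul (2/t)
      refine h.congr_deriv ?_
      simp only [id]
      field_simp
    rw [intervalIntegral.integral_eq_sub_of_hasDerivAt this
      (Continuous.intervalIntegrable (by fun_prop) _ _)]
    simp [mul_comm]
  have h3 : t * t = t ^ 2 := by ring
  rw [h2, h3] at h1
  have := Real.exp_pos (t^2/2)
  have h4 : 0 < 2/t := by positivity
  nlinarith

lemma seg_le {p q : ℝ} (hp : 0 < p) (hpq : p ≤ q) :
    EE q ≤ EE p + (Real.exp (q ^ 2 / 2) - Real.exp (p ^ 2 / 2)) / p := by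
  have hadd : EE p + (∫ s in p..q, Real.exp (s ^ 2 / 2)) = EE q :=
    intervalIntegral.integral_add_adjacent_intervals (contExp.intervalIntegrable _ _)
      (contExp.intervalIntegrable _ _)
  have h1 : (∫ s in p..q, Real.exp (s ^ 2 / 2)) ≤ ∫ s in p..q, (s / p) * Real.exp (s ^ 2 / 2) := by
    apply intervalIntegral.integral_mono_on hpq (contExp.intervalIntegrable _ _)
      (Continuous.intervalIntegrable (by fun_prop) _ _)
    intro x hx
    have hx1 : p ≤ x := hx.1
    have hE := Real.exp_pos (x ^ 2 / 2)
    have h1x : (1:ℝ) ≤ x / p := (one_le_div hp).2 hx1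
    nlinarith [hE.le, h1x]
  have h2 : (∫ s in p..q, (s / p) * Real.exp (s ^ 2 / 2))
      = (Real.exp (q ^ 2 / 2) - Real.exp (p ^ 2 / 2)) / p := by
    have : ∀ s ∈ Set.uIcc p q, HasDerivAt (fun s => Real.exp (s ^ 2 / 2) / p)
        ((s / p) * Real.exp (s ^ 2 / 2)) s := by
      intro s _
      have h := (((hasDerivAt_pow 2 s).div_const 2).exp).div_const p
      refine h.congr_deriv ?_
      simp
      ring
    rw [intervalIntegral.integral_eq_sub_of_hasDerivAt this
      (Continuous.intervalIntegrable (by fun_prop) _ _)]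
    ring
  rw [h2] at h1
  linarith

lemma X_lb : (1.6487212 : ℝ) < Real.exp (1 / 2) := by
  have h := Real.exp_one_gt_d9
  have hx : Real.exp (1/2 : ℝ) ^ 2 = Real.exp 1 := by
    rw [← Real.exp_nat_mul]; norm_num
  have hpos := Real.exp_pos (1/2 : ℝ)
  nlinarith

lemma X_ub : Real.exp (1 / 2) < (1.6487213 : ℝ) := by
  have h := Real.exp_one_lt_d9
  have hx : Real.exp (1/2 : ℝ) ^ 2 = Real.exp 1 := by
    rw [← Real.exp_nat_mul]; norm_num
  have hpos := Real.exp_pos (1/2 : ℝ)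
  nlinarith

lemma sqrt2_lb : (1.4142135 : ℝ) < Real.sqrt 2 := by
  have h : Real.sqrt 2 ^ 2 = 2 := Real.sq_sqrt (by norm_num)
  have hpos : (0:ℝ) ≤ Real.sqrt 2 := Real.sqrt_nonneg _
  nlinarith

lemma sqrt2_ub : Real.sqrt 2 < (1.4142136 : ℝ) := by
  have h : Real.sqrt 2 ^ 2 = 2 := Real.sq_sqrt (by norm_num)
  have hpos : (0:ℝ) ≤ Real.sqrt 2 := Real.sqrt_nonneg _
  nlinarith

lemma sqrt5_lb : (2.2360679 : ℝ) < Real.sqrt 5 := by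
  have h : Real.sqrt 5 ^ 2 = 5 := Real.sq_sqrt (by norm_num)
  have hpos : (0:ℝ) ≤ Real.sqrt 5 := Real.sqrt_nonneg _
  nlinarith

lemma sqrt6_lb : (2.4494897 : ℝ) < Real.sqrt 6 := by
  have h : Real.sqrt 6 ^ 2 = 6 := Real.sq_sqrt (by norm_num)
  have hpos : (0:ℝ) ≤ Real.sqrt 6 := Real.sqrt_nonneg _
  nlinarith

lemma sqrt6_ub : Real.sqrt 6 < (2.4494898 : ℝ) := by
  have h : Real.sqrt 6 ^ 2 = 6 := Real.sq_sqrt (by norm_num)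
  have hpos : (0:ℝ) ≤ Real.sqrt 6 := Real.sqrt_nonneg _
  nlinarith

noncomputable def RR (t : ℝ) : ℝ := t * Real.exp (t ^ 2 / 2) / (t ^ 2 - 2) - EE t

lemma RR_hasDeriv {t : ℝ} (hne : t ^ 2 - 2 ≠ 0) :
    HasDerivAt RR (Real.exp (t ^ 2 / 2) * (t ^ 2 - 6) / (t ^ 2 - 2) ^ 2) t := by
  have hinner : HasDerivAt (fun s : ℝ => s ^ 2 / 2) t t := by
    simpa using (hasDerivAt_pow 2 t).div_const 2
  have hexp := hinner.exp
  have hnum := (hasDerivAt_id t).mul hexp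
  have hden : HasDerivAt (fun s : ℝ => s ^ 2 - 2) (2 * t) t := by
    simpa using (hasDerivAt_pow 2 t).sub_const 2
  have h := (hnum.div hden hne).sub (EE_hasDeriv t)
  refine h.congr_deriv ?_
  simp only [id, Pi.mul_apply]
  field_simp
  ring

lemma RR_anti : AntitoneOn RR (Icc 2 (Real.sqrt 6)) := by
  have h6 : (2:ℝ) ≤ Real.sqrt 6 := by linarith [sqrt6_lb]
  apply antitoneOn_of_deriv_nonpos (convex_Icc _ _)
  · intro x hx
    have hx2 : (2:ℝ) ≤ x := hx.1
    have hne : x ^ 2 - 2 ≠ 0 := by nlinarith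
    exact (RR_hasDeriv hne).differentiableAt.continuousAt.continuousWithinAt
  · intro x hx
    rw [interior_Icc] at hx
    have hx2 : (2:ℝ) < x := hx.1
    have hne : x ^ 2 - 2 ≠ 0 := by nlinarith
    exact (RR_hasDeriv hne).differentiableAt.differentiableWithinAt
  · intro x hx
    rw [interior_Icc] at hx
    have hx2 : (2:ℝ) < x := hx.1
    have hx6 : x < Real.sqrt 6 := hx.2
    have hne : x ^ 2 - 2 ≠ 0 := by nlinarith
    rw [(RR_hasDeriv hne).deriv]
    have hx6' : x ^ 2 < 6 := by
      have h := Real.sq_sqrt (by norm_num : (6:ℝ) ≥ 0)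
      nlinarith [Real.sqrt_nonneg 6]
    have he := Real.exp_pos (x ^ 2 / 2)
    apply div_nonpos_of_nonpos_of_nonneg _ (by positivity)
    nlinarith

lemma RR_mono : MonotoneOn RR (Ici (Real.sqrt 6)) := by
  have h6 : (2:ℝ) ≤ Real.sqrt 6 := by linarith [sqrt6_lb]
  apply monotoneOn_of_deriv_nonneg (convex_Ici _)
  · intro x hx
    have hx2 : (2:ℝ) ≤ x := le_trans h6 hx
    have hne : x ^ 2 - 2 ≠ 0 := by nlinarith
    exact (RR_hasDeriv hne).differentiableAt.continuousAt.continuousWithinAt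
  · intro x hx
    rw [interior_Ici] at hx
    have hx2 : (2:ℝ) < x := lt_of_le_of_lt h6 hx
    have hne : x ^ 2 - 2 ≠ 0 := by nlinarith
    exact (RR_hasDeriv hne).differentiableAt.differentiableWithinAt
  · intro x hx
    rw [interior_Ici] at hx
    have hx2 : (2:ℝ) < x := lt_of_le_of_lt h6 hx
    have hne : x ^ 2 - 2 ≠ 0 := by nlinarith
    rw [(RR_hasDeriv hne).deriv]
    have hgt : Real.sqrt 6 < x := hx
    have hx6 : 6 ≤ x ^ 2 := by
      have h := Real.sq_sqrt (by norm_num : (6:ℝ) ≥ 0)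
      nlinarith [Real.sqrt_nonneg 6, hgt]
    have he := Real.exp_pos (x ^ 2 / 2)
    apply div_nonneg _ (by positivity)
    nlinarith


lemma X2_bounds : (2.7182815:ℝ) < Real.exp (1/2:ℝ) ^ 2 ∧ Real.exp (1/2:ℝ) ^ 2 < 2.7182820 := by
  have h1 := X_lb; have h2 := X_ub
  have h0 : (0:ℝ) < Real.exp (1/2:ℝ) := Real.exp_pos _
  constructor <;> nlinarith

lemma X4_bounds : (7.3890540:ℝ) < Real.exp (1/2:ℝ) ^ 4 ∧ Real.exp (1/2:ℝ) ^ 4 < 7.3890575 := by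
  obtain ⟨h1, h2⟩ := X2_bounds
  have h0 : (0:ℝ) < Real.exp (1/2:ℝ) ^ 2 := by positivity
  have e4 : Real.exp (1/2:ℝ) ^ 4 = (Real.exp (1/2:ℝ) ^ 2) ^ 2 := by ring
  constructor <;> (rw [e4]; nlinarith)

lemma X5_bounds : (12.182489:ℝ) < Real.exp (1/2:ℝ) ^ 5 ∧ Real.exp (1/2:ℝ) ^ 5 < 12.182500 := by
  obtain ⟨h1, h2⟩ := X4_bounds
  have h3 := X_lb; have h4 := X_ub
  have h0 : (0:ℝ) < Real.exp (1/2:ℝ) := Real.exp_pos _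
  have h0' : (0:ℝ) < Real.exp (1/2:ℝ) ^ 4 := by positivity
  have e5 : Real.exp (1/2:ℝ) ^ 5 = Real.exp (1/2:ℝ) ^ 4 * Real.exp (1/2:ℝ) := by ring
  constructor <;> (rw [e5]; nlinarith)

lemma X6_bounds : (20.0855290:ℝ) < Real.exp (1/2:ℝ) ^ 6 ∧ Real.exp (1/2:ℝ) ^ 6 < 20.0855440 := by
  obtain ⟨h1, h2⟩ := X4_bounds
  obtain ⟨h3, h4⟩ := X2_bounds
  have h0 : (0:ℝ) < Real.exp (1/2:ℝ) ^ 2 := by positivity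
  have h0' : (0:ℝ) < Real.exp (1/2:ℝ) ^ 4 := by positivity
  have e6 : Real.exp (1/2:ℝ) ^ 6 = Real.exp (1/2:ℝ) ^ 4 * Real.exp (1/2:ℝ) ^ 2 := by ring
  constructor <;> (rw [e6]; nlinarith)

lemma EE_sqrt6_le : EE (Real.sqrt 6) ≤ Real.sqrt 6 * Real.exp 3 / 4 := by
  have hs2l := sqrt2_lb; have hs2u := sqrt2_ub
  have hs5l := sqrt5_lb; have hs6l := sqrt6_lb; have hs6u := sqrt6_ub
  have hs2sq : Real.sqrt 2 ^ 2 = 2 := Real.sq_sqrt (by norm_num)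
  have hs5sq : Real.sqrt 5 ^ 2 = 5 := Real.sq_sqrt (by norm_num)
  have hs6sq : Real.sqrt 6 ^ 2 = 6 := Real.sq_sqrt (by norm_num)
  have hs2pos : (0:ℝ) < Real.sqrt 2 := by linarith
  have hs5pos : (0:ℝ) < Real.sqrt 5 := by linarith
  have h1 : EE (Real.sqrt 2) ≤ Real.sqrt 2 * (Real.exp 1 - 1) := by
    have h := EE_le hs2pos
    rw [hs2sq] at h
    norm_num at h
    exact h
  have h2 : EE 2 ≤ EE (Real.sqrt 2) + (Real.exp 2 - Real.exp 1) / Real.sqrt 2 := by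
    have h := seg_le hs2pos (by linarith : Real.sqrt 2 ≤ 2)
    rw [hs2sq] at h
    norm_num at h
    exact h
  have h3 : EE (Real.sqrt 5) ≤ EE 2 + (Real.exp (5/2) - Real.exp 2) / 2 := by
    have h := seg_le (by norm_num : (0:ℝ) < 2) (by linarith : (2:ℝ) ≤ Real.sqrt 5)
    rw [hs5sq] at h
    norm_num at h
    exact h
  have h4 : EE (Real.sqrt 6) ≤ EE (Real.sqrt 5) + (Real.exp 3 - Real.exp (5/2)) / Real.sqrt 5 := by
    have h := seg_le hs5pos (by nlinarith : Real.sqrt 5 ≤ Real.sqrt 6)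
    rw [hs5sq, hs6sq] at h
    norm_num at h
    exact h
  have he1 : Real.exp 1 = Real.exp (1/2:ℝ) ^ 2 := by rw [← Real.exp_nat_mul]; norm_num
  have he2 : Real.exp 2 = Real.exp (1/2:ℝ) ^ 4 := by rw [← Real.exp_nat_mul]; norm_num
  have he5 : Real.exp (5/2:ℝ) = Real.exp (1/2:ℝ) ^ 5 := by rw [← Real.exp_nat_mul]; norm_num
  have he3 : Real.exp 3 = Real.exp (1/2:ℝ) ^ 6 := by rw [← Real.exp_nat_mul]; norm_num
  obtain ⟨hX2l, hX2u⟩ := X2_bounds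
  obtain ⟨hX4l, hX4u⟩ := X4_bounds
  obtain ⟨hX5l, hX5u⟩ := X5_bounds
  obtain ⟨hX6l, hX6u⟩ := X6_bounds
  have ht1 : Real.sqrt 2 * (Real.exp 1 - 1) ≤ 2.4301 := by
    rw [he1]
    have h := mul_le_mul hs2u.le (by linarith : Real.exp (1/2:ℝ) ^ 2 - 1 ≤ 1.7182820)
      (by linarith) (by norm_num)
    linarith [h]
  have ht2 : (Real.exp 2 - Real.exp 1) / Real.sqrt 2 ≤ 3.3028 := by
    rw [he1, he2]
    refine le_trans (div_le_div₀ (by norm_num : (0:ℝ) ≤ 4.6707760)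
      (by linarith) (by norm_num) hs2l.le) (by norm_num)
  have ht3 : (Real.exp (5/2) - Real.exp 2) / 2 ≤ 2.3968 := by
    rw [he2, he5]; linarith
  have ht4 : (Real.exp 3 - Real.exp (5/2)) / Real.sqrt 5 ≤ 3.5344 := by
    rw [he5, he3]
    refine le_trans (div_le_div₀ (by norm_num : (0:ℝ) ≤ 7.9030550)
      (by linarith) (by norm_num) hs5l.le) (by norm_num)
  have hlhs : (12.2998:ℝ) ≤ Real.sqrt 6 * Real.exp 3 / 4 := by
    rw [he3]
    have h := mul_le_mul hs6l.le hX6l.le (by norm_num) (by linarith)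
    linarith [h]
  linarith

lemma key {t : ℝ} (ht : 0 < t) : (t ^ 2 - 2) * EE t ≤ t * Real.exp (t ^ 2 / 2) := by
  rcases le_or_gt t 2 with h2 | h2
  · rcases le_or_gt (t ^ 2) 2 with hu | hu
    · have hE : 0 < EE t := EE_pos ht
      have he := Real.exp_pos (t ^ 2 / 2)
      nlinarith
    · have hEl := EE_le ht
      have he1 : (1:ℝ) ≤ Real.exp (t ^ 2 / 2) := by
        rw [← Real.exp_zero]; apply Real.exp_le_exp.2; positivity
      have hmul : t * EE t ≤ 2 * (Real.exp (t ^ 2 / 2) - 1) := by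
        have h := mul_le_mul_of_nonneg_left hEl ht.le
        calc t * EE t ≤ t * ((2/t) * (Real.exp (t ^ 2 / 2) - 1)) := h
          _ = 2 * (Real.exp (t ^ 2 / 2) - 1) := by field_simp
      have hfin : t * ((t ^ 2 - 2) * EE t) ≤ t * (t * Real.exp (t ^ 2 / 2)) := by
        have hE : 0 < EE t := EE_pos ht
        nlinarith [mul_le_mul_of_nonneg_left hmul (by nlinarith : (0:ℝ) ≤ t ^ 2 - 2),
          mul_le_mul_of_nonneg_left he1 (by nlinarith : (0:ℝ) ≤ 4 - t ^ 2)]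
      exact le_of_mul_le_mul_left hfin ht
  · have hs6l := sqrt6_lb; have hs6u := sqrt6_ub
    have hs6sq : Real.sqrt 6 ^ 2 = 6 := Real.sq_sqrt (by norm_num)
    have hR6 : 0 ≤ RR (Real.sqrt 6) := by
      have h1 : RR (Real.sqrt 6) = Real.sqrt 6 * Real.exp 3 / 4 - EE (Real.sqrt 6) := by
        unfold RR
        rw [hs6sq]
        norm_num
      rw [h1]
      linarith [EE_sqrt6_le]
    have hRt : 0 ≤ RR t := by
      rcases le_or_gt t (Real.sqrt 6) with h6 | h6
      · have h := RR_anti (Set.mem_Icc.2 ⟨h2.le, h6⟩)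
          (Set.mem_Icc.2 ⟨by linarith, le_refl _⟩) h6
        linarith
      · have h := RR_mono (Set.mem_Ici.2 (le_refl _)) (Set.mem_Ici.2 h6.le) h6.le
        linarith
    have hden : (0:ℝ) < t ^ 2 - 2 := by nlinarith
    have hle : EE t ≤ t * Real.exp (t ^ 2 / 2) / (t ^ 2 - 2) := by
      unfold RR at hRt; linarith
    calc (t ^ 2 - 2) * EE t ≤ (t ^ 2 - 2) * (t * Real.exp (t ^ 2 / 2) / (t ^ 2 - 2)) :=
          mul_le_mul_of_nonneg_left hle hden.le
      _ = t * Real.exp (t ^ 2 / 2) := by field_simp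

section Main

variable {b : ℝ}

lemma contg (hb : 0 < b) : Continuous fun s : ℝ => (1 + s ^ 2 / b) ^ (b / 2) := by
  apply Continuous.rpow_const (by fun_prop)
  intro x
  exact Or.inr (by positivity)

lemma gpos (hb : 0 < b) (s : ℝ) : 0 < (1 + s ^ 2 / b) ^ (b / 2) :=
  Real.rpow_pos_of_pos (by positivity) _

noncomputable def FF (b t : ℝ) : ℝ := ∫ s in (0:ℝ)..t, (1 + s ^ 2 / b) ^ (b / 2)

lemma FF_hasDeriv (hb : 0 < b) (t : ℝ) :
    HasDerivAt (FF b) ((1 + t ^ 2 / b) ^ (b / 2)) t :=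
  intervalIntegral.integral_hasDerivAt_right ((contg hb).intervalIntegrable _ _)
    ((contg hb).stronglyMeasurableAtFilter _ _) (contg hb).continuousAt

lemma FF_pos (hb : 0 < b) {t : ℝ} (ht : 0 < t) : 0 < FF b t :=
  intervalIntegral.intervalIntegral_pos_of_pos_on ((contg hb).intervalIntegrable _ _)
    (fun x _ => gpos hb x) ht

noncomputable def DD (b t : ℝ) : ℝ :=
  Real.exp (-(t ^ 2 / 2)) * ((1 + t ^ 2 / b) * (1 + t ^ 2 / b) ^ (b / 2)) * EE t - FF b t

lemma DD_hasDeriv (hb : 0 < b) (t : ℝ) :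
    HasDerivAt (DD b)
      (((1 + t ^ 2 / b) ^ (b / 2) / b) *
        (t * (2 - t ^ 2) * Real.exp (-(t ^ 2 / 2)) * EE t + t ^ 2)) t := by
  have hC : (0:ℝ) < 1 + t ^ 2 / b := by positivity
  have hc : HasDerivAt (fun s : ℝ => 1 + s ^ 2 / b) (2 * t / b) t := by
    have h := ((hasDerivAt_pow 2 t).div_const b).const_add 1
    simpa using h
  have hg : HasDerivAt (fun s : ℝ => (1 + s ^ 2 / b) ^ (b / 2))
      ((b / 2) * (1 + t ^ 2 / b) ^ (b / 2 - 1) * (2 * t / b)) t := by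
    have h := (Real.hasDerivAt_rpow_const (p := b / 2) (Or.inl hC.ne')).comp t hc
    exact h
  have hu : HasDerivAt (fun s : ℝ => Real.exp (-(s ^ 2 / 2)))
      (Real.exp (-(t ^ 2 / 2)) * (-t)) t := by
    have hinner : HasDerivAt (fun s : ℝ => -(s ^ 2 / 2)) (-t) t := by
      exact ((hasDerivAt_pow 2 t).div_const 2).neg.congr_deriv (by push_cast; ring)
    exact hinner.exp
  have hD := ((hu.mul (hc.mul hg)).mul (EE_hasDeriv t)).sub (FF_hasDeriv hb t)
  refine hD.congr_deriv ?_
  simp only [Pi.mul_apply]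
  have hG1 : (1 + t ^ 2 / b) ^ (b / 2 - 1) = (1 + t ^ 2 / b) ^ (b / 2) / (1 + t ^ 2 / b) :=
    Real.rpow_sub_one hC.ne' _
  have hUe : Real.exp (-(t ^ 2 / 2)) * Real.exp (t ^ 2 / 2) = 1 := by
    rw [← Real.exp_add]; simp
  rw [hG1, show (t:ℝ) ^ 2 / 2 = -(-(t ^ 2 / 2)) by ring, Real.exp_neg]
  have hEpos := Real.exp_pos (-(t ^ 2 / 2))
  field_simp
  ring

end Main

lemma DD_nonneg (hb : 0 < b) {t : ℝ} (ht : 0 < t) : 0 ≤ DD b t := by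
  have hmono : MonotoneOn (DD b) (Ici (0:ℝ)) := by
    apply monotoneOn_of_deriv_nonneg (convex_Ici 0)
    · exact (Differentiable.continuous fun x => (DD_hasDeriv hb x).differentiableAt).continuousOn
    · intro x _
      exact (DD_hasDeriv hb x).differentiableAt.differentiableWithinAt
    · intro x hx
      rw [interior_Ici] at hx
      have hx0 : (0:ℝ) < x := hx
      rw [(DD_hasDeriv hb x).deriv]
      have hGb : 0 ≤ (1 + x ^ 2 / b) ^ (b / 2) / b := by
        have := gpos hb x; positivity
      apply mul_nonneg hGb
      have hU := Real.exp_pos (-(x ^ 2 / 2))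
      have hE := EE_pos hx0
      rcases le_or_gt (x ^ 2) 2 with h2 | h2
      · have : 0 ≤ x * (2 - x ^ 2) * Real.exp (-(x ^ 2 / 2)) * EE x := by
          apply mul_nonneg (mul_nonneg (mul_nonneg (by positivity) (by linarith)) hU.le) hE.le
        nlinarith
      · have hk := key hx0
        have hUe : Real.exp (-(x ^ 2 / 2)) * Real.exp (x ^ 2 / 2) = 1 := by
          rw [← Real.exp_add]; simp
        have hmul := mul_le_mul_of_nonneg_left hk
          (by positivity : (0:ℝ) ≤ x * Real.exp (-(x ^ 2 / 2)))
        nlinarith [hmul, hUe]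
  have h0 : DD b 0 = 0 := by
    unfold DD EE FF
    simp
  have := hmono (Set.mem_Ici.2 (le_refl (0:ℝ))) (Set.mem_Ici.2 ht.le) ht.le
  linarith

lemma main_ineq (hb : 0 < b) {t : ℝ} (ht : 0 < t) :
    Real.exp (t ^ 2 / 2) / (t * EE t) ≤
      (1 + t ^ 2 / b) ^ ((1:ℝ) + b / 2) / (t * FF b t) := by
  have hC : (0:ℝ) < 1 + t ^ 2 / b := by positivity
  have hG := gpos hb t
  have hE := EE_pos ht
  have hF := FF_pos hb ht
  have hD := DD_nonneg hb ht
  unfold DD at hD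
  have hh : (1 + t ^ 2 / b) ^ ((1:ℝ) + b / 2)
      = (1 + t ^ 2 / b) * (1 + t ^ 2 / b) ^ (b / 2) := by
    rw [Real.rpow_add hC, Real.rpow_one]
  rw [hh, div_le_div_iff₀ (by positivity) (by positivity)]
  -- from hD : FF b t ≤ exp(-(t^2/2)) * (C * G) * EE t
  have hUe : Real.exp (-(t ^ 2 / 2)) * Real.exp (t ^ 2 / 2) = 1 := by
    rw [← Real.exp_add]; simp
  have hstep : Real.exp (t ^ 2 / 2) * FF b t
      ≤ (1 + t ^ 2 / b) * (1 + t ^ 2 / b) ^ (b / 2) * EE t := by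
    have hm := mul_le_mul_of_nonneg_left (by linarith :
        FF b t ≤ Real.exp (-(t ^ 2 / 2)) * ((1 + t ^ 2 / b) * (1 + t ^ 2 / b) ^ (b / 2)) * EE t)
      (Real.exp_pos (t ^ 2 / 2)).le
    calc Real.exp (t ^ 2 / 2) * FF b t
        ≤ Real.exp (t ^ 2 / 2) * (Real.exp (-(t ^ 2 / 2)) *
            ((1 + t ^ 2 / b) * (1 + t ^ 2 / b) ^ (b / 2)) * EE t) := hm
      _ = (Real.exp (-(t ^ 2 / 2)) * Real.exp (t ^ 2 / 2)) *
            ((1 + t ^ 2 / b) * (1 + t ^ 2 / b) ^ (b / 2) * EE t) := by ring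
      _ = (1 + t ^ 2 / b) * (1 + t ^ 2 / b) ^ (b / 2) * EE t := by rw [hUe]; ring
  nlinarith [hstep, ht]

theorem stmt_13 (a : ℝ) (ha : a < 0) :
    ∀ t : ℝ, 0 < t →
      Real.exp (t ^ 2 / 2) / (t * ∫ s in (0:ℝ)..t, Real.exp (s ^ 2 / 2)) ≤
        (1 + t ^ 2 / (-a)) ^ (1 - a / 2) /
          (t * ∫ s in (0:ℝ)..t, (1 + s ^ 2 / (-a)) ^ (-a / 2)) := by
  intro t ht
  have hb : (0:ℝ) < -a := by linarith
  have h := main_ineq hb ht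
  have he1 : (1:ℝ) - a / 2 = 1 + (-a) / 2 := by ring
  rw [he1]
  exact h
end

section
/- Let a < 1 and ε ≥ 0, and let ρ_ε^a(y) = (ε² + y²)^{a/2}. Then there is a constant c > 0 independent of ε such that for all y > 0: |d/dy log(π_ε^a(y))| ≤ 2·max{1, 1-a}/y, where π_ε^a(y) = ((1-a)∫₀^y ρ_ε^{-a}(s) ds)². -/
open MeasureTheory Set intervalIntegral

private lemma rho_contOn (a ε : ℝ) :
    ContinuousOn (fun s : ℝ => (ε ^ 2 + s ^ 2) ^ (-a / 2)) (Ioi 0) := by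
  intro s hs
  have hbase : ContinuousAt (fun s : ℝ => ε ^ 2 + s ^ 2) s :=
    (continuous_const.add (continuous_pow 2)).continuousAt
  have hpos : 0 < ε ^ 2 + s ^ 2 := by
    have : (0:ℝ) < s := hs
    positivity
  exact (hbase.rpow_const (Or.inl hpos.ne')).continuousWithinAt

private lemma rho_integrable (a ε y : ℝ) (ha : a < 1) (hy : 0 < y) :
    IntervalIntegrable (fun s : ℝ => (ε ^ 2 + s ^ 2) ^ (-a / 2)) volume 0 y := by
  rcases eq_or_lt_of_le (sq_nonneg ε) with hε | hε
  · -- ε ^ 2 = 0 : the function equals s ^ (-a) on Ioc 0 y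
    have hint : IntervalIntegrable (fun s : ℝ => s ^ (-a)) volume 0 y :=
      intervalIntegrable_rpow' (by linarith)
    rw [intervalIntegrable_iff_integrableOn_Ioc_of_le hy.le] at hint ⊢
    refine hint.congr_fun (fun s hs => ?_) measurableSet_Ioc
    have hs0 : (0:ℝ) < s := hs.1
    rw [← hε, zero_add]
    rw [← Real.rpow_natCast s 2, ← Real.rpow_mul hs0.le]
    congr 1
    ring
  · -- ε ^ 2 > 0 : the function is continuous
    have hc : Continuous (fun s : ℝ => (ε ^ 2 + s ^ 2) ^ (-a / 2)) := by
      refine (continuous_const.add (continuous_pow 2)).rpow_const (fun s => Or.inl ?_)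
      show ε ^ 2 + s ^ 2 ≠ 0
      exact ne_of_gt (by nlinarith [sq_nonneg s])
    exact hc.intervalIntegrable 0 y

private lemma rho_key (a ε y : ℝ) (ha : a < 1) (hε : 0 ≤ ε) (hy : 0 < y) :
    y * (ε ^ 2 + y ^ 2) ^ (-a / 2) ≤
      max 1 (1 - a) * ∫ s in (0:ℝ)..y, (ε ^ 2 + s ^ 2) ^ (-a / 2) := by
  set ρ : ℝ → ℝ := fun s => (ε ^ 2 + s ^ 2) ^ (-a / 2) with hρ
  have hInt : IntervalIntegrable ρ volume 0 y := rho_integrable a ε y ha hy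
  have hIpos : 0 ≤ ∫ s in (0:ℝ)..y, ρ s := by
    refine intervalIntegral.integral_nonneg hy.le (fun s _ => ?_)
    positivity
  rcases le_or_gt 0 a with hA | hA
  · -- 0 ≤ a : ρ y ≤ ρ s for s ∈ (0, y]
    have h1 : y * ρ y ≤ ∫ s in (0:ℝ)..y, ρ s := by
      have hconst : (∫ _ in (0:ℝ)..y, ρ y) = y * ρ y := by
        simp [smul_eq_mul]
      rw [← hconst]
      refine intervalIntegral.integral_mono_ae_restrict hy.le
        intervalIntegrable_const hInt ?_
      have h0 : ∀ᵐ s : ℝ ∂(volume.restrict (Icc (0:ℝ) y)), s ≠ 0 := by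
        refine ae_restrict_of_ae ?_
        rw [Filter.eventually_iff, mem_ae_iff]
        have : {s : ℝ | s ≠ 0}ᶜ = {0} := by ext s; simp
        rw [this]
        exact measure_singleton 0
      filter_upwards [h0, ae_restrict_mem measurableSet_Icc] with s hs0 hsIcc
      have hspos : 0 < s := lt_of_le_of_ne hsIcc.1 (Ne.symm hs0)
      have hb1 : 0 < ε ^ 2 + s ^ 2 := by positivity
      have hb2 : ε ^ 2 + s ^ 2 ≤ ε ^ 2 + y ^ 2 := by
        have : s ^ 2 ≤ y ^ 2 := by nlinarith [hsIcc.2]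
        linarith
      exact Real.rpow_le_rpow_of_nonpos hb1 hb2 (by linarith)
    calc y * ρ y ≤ ∫ s in (0:ℝ)..y, ρ s := h1
      _ ≤ max 1 (1 - a) * ∫ s in (0:ℝ)..y, ρ s :=
        le_mul_of_one_le_left hIpos (le_max_left _ _)
  · -- a < 0 : monotonicity argument
    have hcρ : Continuous ρ := by
      refine (continuous_const.add (continuous_pow 2)).rpow_const (fun s => Or.inr ?_)
      linarith
    set F : ℝ → ℝ := fun t => ∫ s in (0:ℝ)..t, ρ s with hF
    have hFd : ∀ t : ℝ, HasDerivAt F (ρ t) t := fun t =>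
      intervalIntegral.integral_hasDerivAt_right (hcρ.intervalIntegrable 0 t)
        (hcρ.stronglyMeasurableAtFilter _ _) hcρ.continuousAt
    set g : ℝ → ℝ := fun t => (1 - a) * F t - t * ρ t with hg
    have hFc : Continuous F := by
      have hd : Differentiable ℝ F := fun t => (hFd t).differentiableAt
      exact hd.continuous
    have hgc : Continuous g := (continuous_const.mul hFc).sub (continuous_id.mul hcρ)
    have hgd : ∀ t ∈ Ioo 0 y, HasDerivAt g (-a * ε ^ 2 * (ε ^ 2 + t ^ 2) ^ (-a / 2 - 1)) t := by
      intro t ht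
      have hb : 0 < ε ^ 2 + t ^ 2 := by nlinarith [ht.1]
      have hbase : HasDerivAt (fun t : ℝ => ε ^ 2 + t ^ 2) (2 * t) t := by
        simpa using (hasDerivAt_pow 2 t).const_add (ε ^ 2)
      have hρd : HasDerivAt ρ (2 * t * (-a / 2) * (ε ^ 2 + t ^ 2) ^ (-a / 2 - 1)) t :=
        hbase.rpow_const (Or.inl hb.ne')
      have h2 : HasDerivAt (fun t => t * ρ t)
          (1 * ρ t + t * (2 * t * (-a / 2) * (ε ^ 2 + t ^ 2) ^ (-a / 2 - 1))) t :=
        (hasDerivAt_id t).mul hρd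
      have h3 : HasDerivAt g
          ((1 - a) * ρ t - (1 * ρ t + t * (2 * t * (-a / 2) * (ε ^ 2 + t ^ 2) ^ (-a / 2 - 1)))) t :=
        ((hFd t).const_mul (1 - a)).sub h2
      convert h3 using 1
      have hsplit : (ε ^ 2 + t ^ 2) ^ (-a / 2 - 1) * (ε ^ 2 + t ^ 2) = ρ t := by
        rw [← Real.rpow_add_one hb.ne']
        show _ = (ε ^ 2 + t ^ 2) ^ (-a / 2)
        congr 1
        ring
      rw [← hsplit]; ring
    have hmono : MonotoneOn g (Icc 0 y) := by
      refine monotoneOn_of_deriv_nonneg (convex_Icc 0 y) hgc.continuousOn ?_ ?_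
      · intro t ht
        rw [interior_Icc] at ht
        exact ((hgd t ht).differentiableAt).differentiableWithinAt
      · intro t ht
        rw [interior_Icc] at ht
        rw [(hgd t ht).deriv]
        have hb : 0 < ε ^ 2 + t ^ 2 := by nlinarith [ht.1]
        have := Real.rpow_pos_of_pos hb (-a / 2 - 1)
        have hna : 0 ≤ -a := by linarith
        positivity
    have h0y : g 0 ≤ g y := by
      refine hmono (left_mem_Icc.mpr hy.le) (right_mem_Icc.mpr hy.le) hy.le
    have hg0 : g 0 = 0 := by
      simp [hg, hF]
    rw [hg0] at h0y
    have hmax : max 1 (1 - a) = 1 - a := max_eq_right (by linarith)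
    rw [hmax]
    simp only [hg, hF] at h0y
    linarith

theorem stmt_15 (a : ℝ) (ha : a < 1) :
    ∀ ε : ℝ, 0 ≤ ε → ∀ y : ℝ, 0 < y →
      |deriv (fun t : ℝ =>
          Real.log (((1 - a) * ∫ s in (0:ℝ)..t, (ε ^ 2 + s ^ 2) ^ (-a / 2)) ^ 2)) y| ≤
        2 * max 1 (1 - a) / y := by
  intro ε hε y hy
  set ρ : ℝ → ℝ := fun s => (ε ^ 2 + s ^ 2) ^ (-a / 2) with hρ
  have hInt : IntervalIntegrable ρ volume 0 y := rho_integrable a ε y ha hy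
  set I : ℝ := ∫ s in (0:ℝ)..y, ρ s with hI
  have hIpos : 0 < I := by
    refine intervalIntegral.intervalIntegral_pos_of_pos_on hInt (fun s hs => ?_) hy
    have : (0:ℝ) < s := hs.1
    have : 0 < ε ^ 2 + s ^ 2 := by positivity
    exact Real.rpow_pos_of_pos this _
  have hbpos : 0 < ε ^ 2 + y ^ 2 := by positivity
  have hρy : 0 < ρ y := Real.rpow_pos_of_pos hbpos _
  have hca : 0 < 1 - a := by linarith
  -- derivative of the primitive
  have hFd : HasDerivAt (fun t => ∫ s in (0:ℝ)..t, ρ s) (ρ y) y := by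
    refine intervalIntegral.integral_hasDerivAt_right hInt ?_ ?_
    · exact ContinuousOn.stronglyMeasurableAtFilter isOpen_Ioi (rho_contOn a ε) y hy
    · exact ((continuous_const.add (continuous_pow 2)).continuousAt).rpow_const
        (Or.inl hbpos.ne')
  have hGd : HasDerivAt (fun t => ((1 - a) * ∫ s in (0:ℝ)..t, ρ s) ^ 2)
      (2 * ((1 - a) * I) ^ 1 * ((1 - a) * ρ y)) y := by
    have := (hFd.const_mul (1 - a)).pow 2
    simpa [Pi.pow_def, hI] using this
  have hG0 : ((1 - a) * I) ^ 2 ≠ 0 := by positivity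
  have hLd : HasDerivAt (fun t : ℝ =>
      Real.log (((1 - a) * ∫ s in (0:ℝ)..t, ρ s) ^ 2))
      ((2 * ((1 - a) * I) ^ 1 * ((1 - a) * ρ y)) / ((1 - a) * I) ^ 2) y :=
    hGd.log hG0
  have hderiv : deriv (fun t : ℝ =>
      Real.log (((1 - a) * ∫ s in (0:ℝ)..t, ρ s) ^ 2)) y = 2 * ρ y / I := by
    rw [hLd.deriv]
    field_simp
  rw [hderiv]
  have hkey : y * ρ y ≤ max 1 (1 - a) * I := rho_key a ε y ha hε hy
  have habs : |2 * ρ y / I| = 2 * ρ y / I := abs_of_pos (by positivity)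
  rw [habs, div_le_div_iff₀ hIpos hy]
  nlinarith [hkey]
end

section
/- Let a < 1, α ∈ (0,1), γ ∈ C^{0,α}(B₁⁺). Then the family of functions G_ε(x,y) = ∫₀^y (ε²+s²)^{-a/2}(γ(x,s) − γ(x,0)) ds / ∫₀^y (ε²+s²)^{-a/2} ds, ε ∈ [0,1], is uniformly bounded in C^{0,α}(B₁⁺) by a constant independent of ε, depending only on a, α, and the C^{0,α} norm of γ. -/
open MeasureTheory intervalIntegral Set

-- continuity from Holder
lemma holder_cont {f : ℝ → ℝ} {K α : ℝ} (hα : 0 < α) (hK : 0 ≤ K)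
    (h : ∀ s t, |f s - f t| ≤ K * |s - t| ^ α) : Continuous f := by
  rw [Metric.continuous_iff]
  intro b δ hδ
  refine ⟨(δ / (K + 1)) ^ α⁻¹, by positivity, fun s hs => ?_⟩
  rw [Real.dist_eq] at hs ⊢
  calc |f s - f b| ≤ K * |s - b| ^ α := h s b
    _ ≤ K * ((δ / (K + 1)) ^ α⁻¹) ^ α := by
        gcongr
    _ = K * (δ / (K + 1)) := by rw [Real.rpow_inv_rpow (by positivity) hα.ne']
    _ < δ := by
        rw [mul_div_assoc'] at *
        rw [div_lt_iff₀ (by positivity)]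
        nlinarith

lemma W_nonneg (ε a s : ℝ) : 0 ≤ (ε^2+s^2) ^ (-a/2) := Real.rpow_nonneg (by positivity) _

lemma W_meas (ε a : ℝ) : Measurable fun s : ℝ => (ε^2+s^2) ^ (-a/2) := by fun_prop

lemma W_int {a ε : ℝ} (ha : a < 1) (hε0 : 0 ≤ ε) (hε1 : ε ≤ 1) {y : ℝ} (hy : 0 ≤ y)
    (hy1 : y ≤ 1) : IntervalIntegrable (fun s => (ε^2+s^2) ^ (-a/2)) volume 0 y := by
  have hmax : -(max a 0) > -1 := by simp [ha, neg_lt]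
  apply IntervalIntegrable.mono_fun'
    (g := fun s => (2:ℝ)^(|a|/2) * s ^ (-(max a 0)))
  · exact (intervalIntegrable_rpow' hmax).const_mul _
  · exact (W_meas ε a).aestronglyMeasurable
  · filter_upwards [ae_restrict_mem measurableSet_uIoc] with s hs
    rw [uIoc_of_le hy] at hs
    obtain ⟨hs0, hsy⟩ := hs
    rw [Real.norm_eq_abs, abs_of_nonneg (W_nonneg ε a s)]
    have h1 : (1:ℝ) ≤ (2:ℝ)^(|a|/2) := Real.one_le_rpow one_le_two (by positivity)
    rcases le_or_gt a 0 with hA | hA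
    · rw [max_eq_right hA, neg_zero, Real.rpow_zero, mul_one, abs_of_nonpos hA]
      have : ε^2+s^2 ≤ 2 := by nlinarith
      exact Real.rpow_le_rpow (by positivity) this (by linarith)
    · rw [max_eq_left hA.le]
      have key : (ε^2+s^2) ^ (-a/2) ≤ s ^ (-a) := by
        have : (s^2 : ℝ) ^ (-a/2) = s ^ (-a) := by
          rw [← Real.rpow_natCast s 2, ← Real.rpow_mul hs0.le]
          ring_nf
        rw [← this]
        exact Real.rpow_le_rpow_of_nonpos (by positivity) (by nlinarith) (by linarith)
      calc (ε^2+s^2) ^ (-a/2) ≤ s ^ (-a) := key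
        _ ≤ (2:ℝ)^(|a|/2) * s ^ (-a) := by nlinarith [Real.rpow_nonneg hs0.le (-a)]

lemma W_lb {a ε y : ℝ} (hy : 0 < y) {s : ℝ} (hs : s ∈ Icc (y/2) y) :
    min ((ε^2+(y/2)^2) ^ (-a/2)) ((ε^2+y^2) ^ (-a/2)) ≤ (ε^2+s^2) ^ (-a/2) := by
  obtain ⟨h1, h2⟩ := hs
  have hyP : (0:ℝ) < ε^2+(y/2)^2 := by positivity
  have hb1 : ε^2+(y/2)^2 ≤ ε^2+s^2 := by nlinarith
  have hb2 : ε^2+s^2 ≤ ε^2+y^2 := by nlinarith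
  rcases le_or_gt 0 (-a/2) with hc | hc
  · exact le_trans (min_le_left _ _) (Real.rpow_le_rpow hyP.le hb1 hc)
  · exact le_trans (min_le_right _ _) (Real.rpow_le_rpow_of_nonpos (by linarith) hb2 hc.le)

lemma W_ub {a ε y : ℝ} (hy : 0 < y) {s : ℝ} (hs : s ∈ Icc (y/2) y) :
    (ε^2+s^2) ^ (-a/2) ≤
      (4:ℝ)^(|a|/2) * min ((ε^2+(y/2)^2) ^ (-a/2)) ((ε^2+y^2) ^ (-a/2)) := by
  obtain ⟨h1, h2⟩ := hs
  have hyP : (0:ℝ) < ε^2+(y/2)^2 := by positivity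
  have hyQ : (0:ℝ) < ε^2+y^2 := by positivity
  have hb1 : ε^2+(y/2)^2 ≤ ε^2+s^2 := by nlinarith
  have hb2 : ε^2+s^2 ≤ ε^2+y^2 := by nlinarith
  have h4 : ε^2+y^2 ≤ 4*(ε^2+(y/2)^2) := by nlinarith [sq_nonneg ε]
  rcases le_or_gt 0 (-a/2) with hc | hc
  · have hPQ : (ε^2+(y/2)^2 : ℝ) ^ (-a/2) ≤ (ε^2+y^2) ^ (-a/2) :=
      Real.rpow_le_rpow hyP.le (by nlinarith) hc
    rw [min_eq_left hPQ]
    calc (ε^2+s^2) ^ (-a/2) ≤ (ε^2+y^2) ^ (-a/2) :=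
          Real.rpow_le_rpow (by positivity) hb2 hc
      _ ≤ (4*(ε^2+(y/2)^2)) ^ (-a/2) := Real.rpow_le_rpow (by positivity) h4 hc
      _ = (4:ℝ)^(-a/2) * (ε^2+(y/2)^2) ^ (-a/2) := Real.mul_rpow (by norm_num) hyP.le
      _ ≤ (4:ℝ)^(|a|/2) * (ε^2+(y/2)^2) ^ (-a/2) :=
          mul_le_mul_of_nonneg_right
            (Real.rpow_le_rpow_of_exponent_le (by norm_num) (by cases abs_cases a <;> linarith))
            (Real.rpow_nonneg hyP.le _)
  · have hQP : (ε^2+y^2 : ℝ) ^ (-a/2) ≤ (ε^2+(y/2)^2) ^ (-a/2) :=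
      Real.rpow_le_rpow_of_nonpos hyP (by nlinarith) hc.le
    rw [min_eq_right hQP]
    have key : ((ε^2+y^2)/4 : ℝ) ^ (-a/2) = (4:ℝ)^(a/2) * (ε^2+y^2) ^ (-a/2) := by
      rw [Real.div_rpow hyQ.le (by norm_num), neg_div,
        Real.rpow_neg (by norm_num : (0:ℝ) ≤ 4), div_eq_mul_inv, inv_inv, mul_comm]
    calc (ε^2+s^2) ^ (-a/2) ≤ ((ε^2+y^2)/4) ^ (-a/2) :=
          Real.rpow_le_rpow_of_nonpos (by linarith) (by nlinarith) hc.le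
      _ = (4:ℝ)^(a/2) * (ε^2+y^2) ^ (-a/2) := key
      _ ≤ (4:ℝ)^(|a|/2) * (ε^2+y^2) ^ (-a/2) :=
          mul_le_mul_of_nonneg_right
            (Real.rpow_le_rpow_of_exponent_le (by norm_num) (by cases abs_cases a <;> linarith))
            (Real.rpow_nonneg hyQ.le _)

lemma m_pos {a ε y : ℝ} (hy : 0 < y) :
    0 < min ((ε^2+(y/2)^2) ^ (-a/2)) ((ε^2+y^2) ^ (-a/2)) := by
  have hyP : (0:ℝ) < ε^2+(y/2)^2 := by positivity
  have hyQ : (0:ℝ) < ε^2+y^2 := by positivity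
  exact lt_min (Real.rpow_pos_of_pos hyP _) (Real.rpow_pos_of_pos hyQ _)
lemma D_lb {a ε : ℝ} (ha : a < 1) (hε0 : 0 ≤ ε) (hε1 : ε ≤ 1) {y : ℝ} (hy : 0 < y)
    (hy1 : y ≤ 1) :
    y/2 * min ((ε^2+(y/2)^2) ^ (-a/2)) ((ε^2+y^2) ^ (-a/2)) ≤
      ∫ s in (0:ℝ)..y, (ε^2+s^2) ^ (-a/2) := by
  have hI : IntervalIntegrable (fun s => (ε^2+s^2) ^ (-a/2)) volume 0 y :=
    W_int ha hε0 hε1 hy.le hy1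
  have hI1 : IntervalIntegrable (fun s => (ε^2+s^2) ^ (-a/2)) volume 0 (y/2) :=
    hI.mono_set (by rw [Set.uIcc_of_le (by linarith), Set.uIcc_of_le hy.le]
                    exact Set.Icc_subset_Icc le_rfl (by linarith))
  have hI2 : IntervalIntegrable (fun s => (ε^2+s^2) ^ (-a/2)) volume (y/2) y :=
    hI.mono_set (by rw [Set.uIcc_of_le (by linarith), Set.uIcc_of_le hy.le]
                    exact Set.Icc_subset_Icc (by linarith) le_rfl)
  have hsplit := integral_add_adjacent_intervals hI1 hI2
  have h1 : (0:ℝ) ≤ ∫ s in (0:ℝ)..(y/2), (ε^2+s^2) ^ (-a/2) :=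
    integral_nonneg (by linarith) fun s _ => W_nonneg ε a s
  have h2 : (∫ s in (y/2)..y, (fun _ : ℝ =>
      min ((ε^2+(y/2)^2) ^ (-a/2)) ((ε^2+y^2) ^ (-a/2))) s) ≤
      ∫ s in (y/2)..y, (ε^2+s^2) ^ (-a/2) := by
    apply integral_mono_on (by linarith) (intervalIntegrable_const) hI2
    intro s hs
    exact W_lb hy hs
  rw [intervalIntegral.integral_const, smul_eq_mul] at h2
  have : y - y/2 = y/2 := by ring
  rw [this] at h2
  linarith

lemma D_pos {a ε : ℝ} (ha : a < 1) (hε0 : 0 ≤ ε) (hε1 : ε ≤ 1) {y : ℝ} (hy : 0 < y)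
    (hy1 : y ≤ 1) : 0 < ∫ s in (0:ℝ)..y, (ε^2+s^2) ^ (-a/2) := by
  have := D_lb ha hε0 hε1 hy hy1
  have hm := m_pos (a := a) (ε := ε) hy
  nlinarith

set_option maxHeartbeats 1000000 in
theorem stmt_18 (n : ℕ) (a α K : ℝ) (ha : a < 1) (hα : α ∈ Set.Ioo (0:ℝ) 1) (hK : 0 ≤ K) :
    ∃ C > (0 : ℝ), ∀ γ : EuclideanSpace ℝ (Fin n) → ℝ → ℝ,
      (∀ x₁ s₁ x₂ s₂, |γ x₁ s₁ - γ x₂ s₂| ≤ K * (‖x₁ - x₂‖ + |s₁ - s₂|) ^ α) →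
      (∀ x s, |γ x s| ≤ K) →
      ∀ ε ∈ Set.Icc (0:ℝ) 1,
        (∀ x : EuclideanSpace ℝ (Fin n), ∀ y : ℝ, ‖x‖ ^ 2 + y ^ 2 < 1 → 0 < y →
          |(∫ s in (0:ℝ)..y, (ε ^ 2 + s ^ 2) ^ (-a / 2) * (γ x s - γ x 0)) /
              ∫ s in (0:ℝ)..y, (ε ^ 2 + s ^ 2) ^ (-a / 2)| ≤ C) ∧
        (∀ x₁ x₂ : EuclideanSpace ℝ (Fin n), ∀ y₁ y₂ : ℝ,
          ‖x₁‖ ^ 2 + y₁ ^ 2 < 1 → 0 < y₁ → ‖x₂‖ ^ 2 + y₂ ^ 2 < 1 → 0 < y₂ →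
          |(∫ s in (0:ℝ)..y₁, (ε ^ 2 + s ^ 2) ^ (-a / 2) * (γ x₁ s - γ x₁ 0)) /
              (∫ s in (0:ℝ)..y₁, (ε ^ 2 + s ^ 2) ^ (-a / 2)) -
            (∫ s in (0:ℝ)..y₂, (ε ^ 2 + s ^ 2) ^ (-a / 2) * (γ x₂ s - γ x₂ 0)) /
              (∫ s in (0:ℝ)..y₂, (ε ^ 2 + s ^ 2) ^ (-a / 2))| ≤
            C * (‖x₁ - x₂‖ ^ α + |y₁ - y₂| ^ α)) := by
  obtain ⟨hα0, hα1⟩ := hα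
  set R : ℝ := (4:ℝ) ^ (|a|/2) with hR
  have hRpos : 0 < R := Real.rpow_pos_of_pos (by norm_num) _
  have h2pow : (0:ℝ) ≤ 2 ^ (α+1) := Real.rpow_nonneg (by norm_num) _
  refine ⟨(K+1) * ((2:ℝ) ^ (α+1) + 4 * R + 2), by positivity, ?_⟩
  intro γ hγ hγb ε hε
  obtain ⟨hε0, hε1⟩ := hε
  -- continuity of γ in the second variable
  have hcont : ∀ x, Continuous fun s => γ x s := by
    intro x
    apply holder_cont hα0 hK
    intro s t
    simpa using hγ x s x t
  have hWint : ∀ y : ℝ, 0 ≤ y → y ≤ 1 →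
      IntervalIntegrable (fun s => (ε^2+s^2) ^ (-a/2)) volume 0 y :=
    fun y h1 h2 => W_int ha hε0 hε1 h1 h2
  have hNint : ∀ x, ∀ y : ℝ, 0 ≤ y → y ≤ 1 →
      IntervalIntegrable (fun s => (ε^2+s^2) ^ (-a/2) * (γ x s - γ x 0)) volume 0 y := by
    intro x y h1 h2
    apply IntervalIntegrable.mono_fun' (g := fun s => (ε^2+s^2) ^ (-a/2) * (2*K))
    · exact (hWint y h1 h2).mul_const _
    · exact ((W_meas ε a).aestronglyMeasurable.mul
        ((hcont x).sub continuous_const).aestronglyMeasurable)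
    · filter_upwards with s
      rw [Real.norm_eq_abs, abs_mul, abs_of_nonneg (W_nonneg ε a s)]
      have h3 : |γ x s - γ x 0| ≤ 2*K := by
        have e1 := abs_le.mp (hγb x s)
        have e2 := abs_le.mp (hγb x 0)
        rw [abs_le]; constructor <;> [linarith [e1.1, e2.2]; linarith [e1.2, e2.1]]
      exact mul_le_mul_of_nonneg_left h3 (W_nonneg ε a s)
  -- numerator bound on [y₁, y₂]
  have hNB : ∀ x, ∀ y₁ y₂ B : ℝ, 0 ≤ y₁ → y₁ ≤ y₂ → 0 ≤ B →
      (∀ t, y₁ < t → t ≤ y₂ → |γ x t - γ x 0| ≤ B) →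
      IntervalIntegrable (fun s => (ε^2+s^2) ^ (-a/2)) volume y₁ y₂ →
      0 ≤ (∫ s in y₁..y₂, (ε^2+s^2) ^ (-a/2)) →
      |∫ s in y₁..y₂, (ε^2+s^2) ^ (-a/2) * (γ x s - γ x 0)| ≤
        B * ∫ s in y₁..y₂, (ε^2+s^2) ^ (-a/2) := by
    intro x y₁ y₂ B hy₁ h12 hB hbd hint hTnn
    have hb : ∀ᵐ t ∂volume.restrict (Set.uIoc y₁ y₂),
        ‖(ε^2+t^2) ^ (-a/2) * (γ x t - γ x 0)‖ ≤ B * ((ε^2+t^2) ^ (-a/2)) := by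
      filter_upwards [ae_restrict_mem measurableSet_uIoc] with t ht
      rw [Set.uIoc_of_le h12] at ht
      rw [Real.norm_eq_abs, abs_mul, abs_of_nonneg (W_nonneg ε a t)]
      calc (ε^2+t^2) ^ (-a/2) * |γ x t - γ x 0|
          ≤ (ε^2+t^2) ^ (-a/2) * B :=
            mul_le_mul_of_nonneg_left (hbd t ht.1 ht.2) (W_nonneg ε a t)
        _ = B * ((ε^2+t^2) ^ (-a/2)) := mul_comm _ _
    have h := norm_integral_le_abs_of_norm_le hb (hint.const_mul B)
    rw [Real.norm_eq_abs, intervalIntegral.integral_const_mul,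
      abs_of_nonneg (mul_nonneg hB hTnn)] at h
    exact h
  -- |G x y| ≤ K * y ^ α
  have hA : ∀ x, ∀ y : ℝ, 0 < y → y ≤ 1 →
      |(∫ s in (0:ℝ)..y, (ε ^ 2 + s ^ 2) ^ (-a / 2) * (γ x s - γ x 0)) /
          ∫ s in (0:ℝ)..y, (ε ^ 2 + s ^ 2) ^ (-a / 2)| ≤ K * y ^ α := by
    intro x y hy hy1
    have hD := D_pos ha hε0 hε1 hy hy1
    rw [abs_div, abs_of_pos hD, div_le_iff₀ hD]
    apply hNB x 0 y (K * y ^ α) le_rfl hy.le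
      (mul_nonneg hK (Real.rpow_nonneg hy.le _)) ?_ (hWint y hy.le hy1) hD.le
    intro t ht hty
    have e := hγ x t x 0
    simp only [sub_self, norm_zero, zero_add, sub_zero] at e
    refine e.trans ?_
    have : |t| ^ α ≤ y ^ α :=
      Real.rpow_le_rpow (abs_nonneg t) (by rw [abs_of_pos ht]; exact hty) hα0.le
    exact mul_le_mul_of_nonneg_left this hK
  -- x-difference
  have hB : ∀ x₁ x₂, ∀ y : ℝ, 0 < y → y ≤ 1 →
      |(∫ s in (0:ℝ)..y, (ε ^ 2 + s ^ 2) ^ (-a / 2) * (γ x₁ s - γ x₁ 0)) /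
          (∫ s in (0:ℝ)..y, (ε ^ 2 + s ^ 2) ^ (-a / 2)) -
        (∫ s in (0:ℝ)..y, (ε ^ 2 + s ^ 2) ^ (-a / 2) * (γ x₂ s - γ x₂ 0)) /
          (∫ s in (0:ℝ)..y, (ε ^ 2 + s ^ 2) ^ (-a / 2))| ≤
        2 * K * ‖x₁ - x₂‖ ^ α := by
    intro x₁ x₂ y hy hy1
    have hD := D_pos ha hε0 hε1 hy hy1
    rw [div_sub_div_same, abs_div, abs_of_pos hD, div_le_iff₀ hD]
    rw [← intervalIntegral.integral_sub (hNint x₁ y hy.le hy1) (hNint x₂ y hy.le hy1)]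
    have hb : ∀ᵐ t ∂volume.restrict (Set.uIoc (0:ℝ) y),
        ‖(ε^2+t^2) ^ (-a/2) * (γ x₁ t - γ x₁ 0) - (ε^2+t^2) ^ (-a/2) * (γ x₂ t - γ x₂ 0)‖ ≤
          (2 * K * ‖x₁ - x₂‖ ^ α) * ((ε^2+t^2) ^ (-a/2)) := by
      filter_upwards with t
      rw [Real.norm_eq_abs, ← mul_sub, abs_mul, abs_of_nonneg (W_nonneg ε a t)]
      have h1 : |(γ x₁ t - γ x₁ 0) - (γ x₂ t - γ x₂ 0)| ≤ 2 * K * ‖x₁ - x₂‖ ^ α := by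
        have e1 := hγ x₁ t x₂ t
        have e2 := hγ x₁ 0 x₂ 0
        simp only [sub_self, abs_zero, add_zero] at e1 e2
        calc |(γ x₁ t - γ x₁ 0) - (γ x₂ t - γ x₂ 0)|
            = |(γ x₁ t - γ x₂ t) - (γ x₁ 0 - γ x₂ 0)| := by congr 1; ring
          _ ≤ |γ x₁ t - γ x₂ t| + |γ x₁ 0 - γ x₂ 0| := abs_sub _ _
          _ ≤ 2 * K * ‖x₁ - x₂‖ ^ α := by linarith
      calc (ε^2+t^2) ^ (-a/2) * |(γ x₁ t - γ x₁ 0) - (γ x₂ t - γ x₂ 0)|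
          ≤ (ε^2+t^2) ^ (-a/2) * (2 * K * ‖x₁ - x₂‖ ^ α) :=
            mul_le_mul_of_nonneg_left h1 (W_nonneg ε a t)
        _ = (2 * K * ‖x₁ - x₂‖ ^ α) * ((ε^2+t^2) ^ (-a/2)) := mul_comm _ _
    have h := norm_integral_le_abs_of_norm_le hb ((hWint y hy.le hy1).const_mul _)
    rw [Real.norm_eq_abs, intervalIntegral.integral_const_mul,
      abs_of_nonneg (mul_nonneg (by positivity) hD.le)] at h
    exact h
  -- y-difference, ordered
  have hCy : ∀ x, ∀ y₁ y₂ : ℝ, 0 < y₁ → y₁ ≤ y₂ → y₂ ≤ 1 →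
      |(∫ s in (0:ℝ)..y₁, (ε ^ 2 + s ^ 2) ^ (-a / 2) * (γ x s - γ x 0)) /
          (∫ s in (0:ℝ)..y₁, (ε ^ 2 + s ^ 2) ^ (-a / 2)) -
        (∫ s in (0:ℝ)..y₂, (ε ^ 2 + s ^ 2) ^ (-a / 2) * (γ x s - γ x 0)) /
          (∫ s in (0:ℝ)..y₂, (ε ^ 2 + s ^ 2) ^ (-a / 2))| ≤
        ((2:ℝ) ^ (α+1) * K + 4 * K * R) * (y₂ - y₁) ^ α := by
    intro x y₁ y₂ hy₁ h12 hy₂1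
    have hy₂ : 0 < y₂ := lt_of_lt_of_le hy₁ h12
    have hy₁1 : y₁ ≤ 1 := h12.trans hy₂1
    have hD₁ := D_pos ha hε0 hε1 hy₁ hy₁1
    have hD₂ := D_pos ha hε0 hε1 hy₂ hy₂1
    rcases eq_or_lt_of_le h12 with rfl | hlt
    · simp [Real.zero_rpow hα0.ne']
    have hdpos : 0 < y₂ - y₁ := sub_pos.mpr hlt
    -- |G x yᵢ| ≤ K * y₂ ^ α
    have hy2α : y₁ ^ α ≤ y₂ ^ α := Real.rpow_le_rpow hy₁.le h12 hα0.le
    have hG₁ : |(∫ s in (0:ℝ)..y₁, (ε ^ 2 + s ^ 2) ^ (-a / 2) * (γ x s - γ x 0)) /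
        (∫ s in (0:ℝ)..y₁, (ε ^ 2 + s ^ 2) ^ (-a / 2))| ≤ K * y₂ ^ α :=
      (hA x y₁ hy₁ hy₁1).trans (mul_le_mul_of_nonneg_left hy2α hK)
    have hG₂ : |(∫ s in (0:ℝ)..y₂, (ε ^ 2 + s ^ 2) ^ (-a / 2) * (γ x s - γ x 0)) /
        (∫ s in (0:ℝ)..y₂, (ε ^ 2 + s ^ 2) ^ (-a / 2))| ≤ K * y₂ ^ α := hA x y₂ hy₂ hy₂1
    have h2exp : (2:ℝ) ^ (α+1) = 2 * 2 ^ α := by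
      rw [Real.rpow_add (by norm_num : (0:ℝ) < 2), Real.rpow_one]; ring
    rcases le_or_gt y₂ (2*(y₂ - y₁)) with hcase | hcase
    · -- far case
      have h2d : y₂ ^ α ≤ 2 ^ α * (y₂ - y₁) ^ α := by
        rw [← Real.mul_rpow (by norm_num) hdpos.le]
        exact Real.rpow_le_rpow hy₂.le hcase hα0.le
      have htri := abs_sub
        ((∫ s in (0:ℝ)..y₁, (ε ^ 2 + s ^ 2) ^ (-a / 2) * (γ x s - γ x 0)) /
          (∫ s in (0:ℝ)..y₁, (ε ^ 2 + s ^ 2) ^ (-a / 2)))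
        ((∫ s in (0:ℝ)..y₂, (ε ^ 2 + s ^ 2) ^ (-a / 2) * (γ x s - γ x 0)) /
          (∫ s in (0:ℝ)..y₂, (ε ^ 2 + s ^ 2) ^ (-a / 2)))
      have hdα : (0:ℝ) ≤ (y₂ - y₁) ^ α := Real.rpow_nonneg hdpos.le _
      have hs1 : K * y₂ ^ α ≤ K * (2 ^ α * (y₂ - y₁) ^ α) := mul_le_mul_of_nonneg_left h2d hK
      have hs2 : (0:ℝ) ≤ 4 * K * R * (y₂ - y₁) ^ α := by positivity
      rw [h2exp]
      nlinarith
    · -- near case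
      have hhalf : y₂/2 ≤ y₁ := by linarith
      have hmpos := m_pos (a := a) (ε := ε) hy₂
      have hWI12 : IntervalIntegrable (fun s => (ε^2+s^2) ^ (-a/2)) volume y₁ y₂ :=
        (hWint y₂ hy₂.le hy₂1).mono_set
          (by rw [uIcc_of_le h12, uIcc_of_le hy₂.le]; exact Icc_subset_Icc hy₁.le le_rfl)
      have hT0 : (0:ℝ) ≤ ∫ s in y₁..y₂, (ε^2+s^2) ^ (-a/2) :=
        intervalIntegral.integral_nonneg h12 fun s _ => W_nonneg ε a s
      have hTdef : (∫ s in (0:ℝ)..y₂, (ε^2+s^2) ^ (-a/2)) -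
          (∫ s in (0:ℝ)..y₁, (ε^2+s^2) ^ (-a/2)) = ∫ s in y₁..y₂, (ε^2+s^2) ^ (-a/2) :=
        intervalIntegral.integral_interval_sub_left (hWint y₂ hy₂.le hy₂1) (hWint y₁ hy₁.le hy₁1)
      have hTub : (∫ s in y₁..y₂, (ε^2+s^2) ^ (-a/2)) ≤ (y₂ - y₁) *
          (R * min ((ε^2+(y₂/2)^2) ^ (-a/2)) ((ε^2+y₂^2) ^ (-a/2))) := by
        have h := intervalIntegral.integral_mono_on h12 hWI12 intervalIntegrable_const
          (g := fun _ : ℝ => R * min ((ε^2+(y₂/2)^2) ^ (-a/2)) ((ε^2+y₂^2) ^ (-a/2)))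
          (fun s hs => W_ub hy₂ ⟨by linarith [hs.1], hs.2⟩)
        rwa [intervalIntegral.integral_const, smul_eq_mul] at h
      have hDlb := D_lb ha hε0 hε1 hy₂ hy₂1
      -- combined: T * y₂ ≤ 2 R (y₂-y₁) D₂
      have hTD : (∫ s in y₁..y₂, (ε^2+s^2) ^ (-a/2)) * y₂ ≤
          2 * R * (y₂ - y₁) * (∫ s in (0:ℝ)..y₂, (ε^2+s^2) ^ (-a/2)) := by
        nlinarith [mul_le_mul_of_nonneg_right hTub hy₂.le,
          mul_le_mul_of_nonneg_left hDlb (by positivity : (0:ℝ) ≤ 2 * R * (y₂ - y₁))]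
      -- key algebraic identity
      have hD₁ne : (∫ s in (0:ℝ)..y₁, (ε ^ 2 + s ^ 2) ^ (-a / 2)) ≠ 0 := hD₁.ne'
      have hD₂ne : (∫ s in (0:ℝ)..y₂, (ε ^ 2 + s ^ 2) ^ (-a / 2)) ≠ 0 := hD₂.ne'
      have hT0' : (0:ℝ) ≤ (∫ s in (0:ℝ)..y₂, (ε^2+s^2) ^ (-a/2)) -
          (∫ s in (0:ℝ)..y₁, (ε^2+s^2) ^ (-a/2)) := by rw [hTdef]; exact hT0
      have hEq : (∫ s in (0:ℝ)..y₁, (ε ^ 2 + s ^ 2) ^ (-a / 2) * (γ x s - γ x 0)) /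
            (∫ s in (0:ℝ)..y₁, (ε ^ 2 + s ^ 2) ^ (-a / 2)) -
          (∫ s in (0:ℝ)..y₂, (ε ^ 2 + s ^ 2) ^ (-a / 2) * (γ x s - γ x 0)) /
            (∫ s in (0:ℝ)..y₂, (ε ^ 2 + s ^ 2) ^ (-a / 2)) =
          -((((∫ s in (0:ℝ)..y₂, (ε ^ 2 + s ^ 2) ^ (-a / 2) * (γ x s - γ x 0)) -
              (∫ s in (0:ℝ)..y₁, (ε ^ 2 + s ^ 2) ^ (-a / 2) * (γ x s - γ x 0))) -
            ((∫ s in (0:ℝ)..y₁, (ε ^ 2 + s ^ 2) ^ (-a / 2) * (γ x s - γ x 0)) /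
              (∫ s in (0:ℝ)..y₁, (ε ^ 2 + s ^ 2) ^ (-a / 2))) *
            ((∫ s in (0:ℝ)..y₂, (ε ^ 2 + s ^ 2) ^ (-a / 2)) -
              (∫ s in (0:ℝ)..y₁, (ε ^ 2 + s ^ 2) ^ (-a / 2)))) /
            (∫ s in (0:ℝ)..y₂, (ε ^ 2 + s ^ 2) ^ (-a / 2))) := by
        generalize (∫ s in (0:ℝ)..y₁, (ε ^ 2 + s ^ 2) ^ (-a / 2) * (γ x s - γ x 0)) = P1
        generalize (∫ s in (0:ℝ)..y₂, (ε ^ 2 + s ^ 2) ^ (-a / 2) * (γ x s - γ x 0)) = P2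
        generalize (∫ s in (0:ℝ)..y₁, (ε ^ 2 + s ^ 2) ^ (-a / 2)) = Q1 at hD₁ne ⊢
        generalize (∫ s in (0:ℝ)..y₂, (ε ^ 2 + s ^ 2) ^ (-a / 2)) = Q2 at hD₂ne ⊢
        field_simp
        ring
      -- numerator difference
      have hNdiff : (∫ s in (0:ℝ)..y₂, (ε ^ 2 + s ^ 2) ^ (-a / 2) * (γ x s - γ x 0)) -
          (∫ s in (0:ℝ)..y₁, (ε ^ 2 + s ^ 2) ^ (-a / 2) * (γ x s - γ x 0)) =
          ∫ s in y₁..y₂, (ε ^ 2 + s ^ 2) ^ (-a / 2) * (γ x s - γ x 0) :=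
        intervalIntegral.integral_interval_sub_left (hNint x y₂ hy₂.le hy₂1)
          (hNint x y₁ hy₁.le hy₁1)
      have hNdb : |∫ s in y₁..y₂, (ε ^ 2 + s ^ 2) ^ (-a / 2) * (γ x s - γ x 0)| ≤
          K * y₂ ^ α * ∫ s in y₁..y₂, (ε^2+s^2) ^ (-a/2) := by
        apply hNB x y₁ y₂ (K * y₂ ^ α) hy₁.le h12
          (mul_nonneg hK (Real.rpow_nonneg hy₂.le _)) ?_ hWI12 hT0
        intro t ht hty
        have e := hγ x t x 0
        simp only [sub_self, norm_zero, zero_add, sub_zero] at e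
        refine e.trans ?_
        have : |t| ^ α ≤ y₂ ^ α := Real.rpow_le_rpow (abs_nonneg t)
          (by rw [abs_of_pos (hy₁.trans ht)]; exact hty) hα0.le
        exact mul_le_mul_of_nonneg_left this hK
      -- abbreviations for linarith
      set T := ∫ s in y₁..y₂, (ε^2+s^2) ^ (-a/2) with hT
      set D1 := ∫ s in (0:ℝ)..y₁, (ε ^ 2 + s ^ 2) ^ (-a / 2) with hD1d
      set D2 := ∫ s in (0:ℝ)..y₂, (ε ^ 2 + s ^ 2) ^ (-a / 2) with hD2d
      set N1 := ∫ s in (0:ℝ)..y₁, (ε ^ 2 + s ^ 2) ^ (-a / 2) * (γ x s - γ x 0) with hN1d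
      set N2 := ∫ s in (0:ℝ)..y₂, (ε ^ 2 + s ^ 2) ^ (-a / 2) * (γ x s - γ x 0) with hN2d
      rw [hEq, abs_neg, abs_div, abs_of_pos hD₂, div_le_iff₀ hD₂]
      have step1 : |(N2 - N1) - (N1/D1) * (D2 - D1)| ≤ |N2 - N1| + |N1/D1| * (D2 - D1) := by
        refine (abs_sub _ _).trans ?_
        rw [abs_mul, abs_of_nonneg hT0']
      have step2 : |N2 - N1| ≤ K * y₂ ^ α * T := by rw [hNdiff]; exact hNdb
      have step3 : |N1/D1| * (D2 - D1) ≤ (K * y₂ ^ α) * T := by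
        rw [hTdef]
        exact mul_le_mul hG₁ le_rfl hT0 (mul_nonneg hK (Real.rpow_nonneg hy₂.le _))
      -- rpow manipulations
      have hu : (0:ℝ) ≤ y₂ ^ (α - 1) := Real.rpow_nonneg hy₂.le _
      have hv : (0:ℝ) ≤ (y₂ - y₁) ^ (α - 1) := Real.rpow_nonneg hdpos.le _
      have hrw2 : y₂ ^ α = y₂ ^ (α - 1) * y₂ := by
        rw [← Real.rpow_add_one hy₂.ne' (α - 1)]; ring_nf
      have hrwd : (y₂ - y₁) ^ α = (y₂ - y₁) ^ (α - 1) * (y₂ - y₁) := by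
        rw [← Real.rpow_add_one hdpos.ne' (α - 1)]; ring_nf
      have hmono : y₂ ^ (α - 1) ≤ (y₂ - y₁) ^ (α - 1) :=
        Real.rpow_le_rpow_of_nonpos hdpos (by linarith) (by linarith)
      have q3 : K * y₂ ^ α * T + K * y₂ ^ α * T ≤
          ((2:ℝ) ^ (α+1) * K + 4 * K * R) * (y₂ - y₁) ^ α * D2 := by
        rw [hrw2, hrwd]
        have c1 : (0:ℝ) ≤ 2 * K * y₂ ^ (α - 1) := by positivity
        have hb1 := mul_le_mul_of_nonneg_left hTD c1
        have c2 : (0:ℝ) ≤ 4 * K * R * (y₂ - y₁) * D2 :=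
          mul_nonneg (mul_nonneg (by positivity) hdpos.le) hD₂.le
        have hb2 := mul_le_mul_of_nonneg_left hmono c2
        have c3 : (0:ℝ) ≤ 2 ^ (α+1) * K * ((y₂ - y₁) ^ (α - 1) * (y₂ - y₁)) * D2 :=
          mul_nonneg (mul_nonneg (mul_nonneg h2pow hK) (mul_nonneg hv hdpos.le)) hD₂.le
        linarith [hb1, hb2, c3]
      linarith [step1.trans (by linarith : |N2 - N1| + |N1/D1| * (D2 - D1) ≤
        K * y₂ ^ α * T + K * y₂ ^ α * T)]
  constructor
  · intro x y hxy hy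
    have hy1 : y ≤ 1 := by nlinarith [sq_nonneg ‖x‖]
    refine (hA x y hy hy1).trans ?_
    have h1 : y ^ α ≤ 1 := Real.rpow_le_one hy.le hy1 hα0.le
    nlinarith [hRpos, h2pow]
  · intro x₁ x₂ y₁ y₂ hx₁ hy₁ hx₂ hy₂
    have hy₁1 : y₁ ≤ 1 := by nlinarith [sq_nonneg ‖x₁‖]
    have hy₂1 : y₂ ≤ 1 := by nlinarith [sq_nonneg ‖x₂‖]
    refine le_trans (abs_sub_le _
      ((∫ s in (0:ℝ)..y₁, (ε ^ 2 + s ^ 2) ^ (-a / 2) * (γ x₂ s - γ x₂ 0)) /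
        (∫ s in (0:ℝ)..y₁, (ε ^ 2 + s ^ 2) ^ (-a / 2))) _) ?_
    have hpart1 := hB x₁ x₂ y₁ hy₁ hy₁1
    have hpart2 : |(∫ s in (0:ℝ)..y₁, (ε ^ 2 + s ^ 2) ^ (-a / 2) * (γ x₂ s - γ x₂ 0)) /
          (∫ s in (0:ℝ)..y₁, (ε ^ 2 + s ^ 2) ^ (-a / 2)) -
        (∫ s in (0:ℝ)..y₂, (ε ^ 2 + s ^ 2) ^ (-a / 2) * (γ x₂ s - γ x₂ 0)) /
          (∫ s in (0:ℝ)..y₂, (ε ^ 2 + s ^ 2) ^ (-a / 2))| ≤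
        ((2:ℝ) ^ (α+1) * K + 4 * K * R) * |y₁ - y₂| ^ α := by
      rcases le_total y₁ y₂ with h | h
      · have h' := hCy x₂ y₁ y₂ hy₁ h hy₂1
        rwa [abs_sub_comm y₁ y₂, abs_of_nonneg (sub_nonneg.mpr h)]
      · have h' := hCy x₂ y₂ y₁ hy₂ h hy₁1
        rw [abs_sub_comm] at h'
        rwa [abs_of_nonneg (sub_nonneg.mpr h)]
    have hxα : (0:ℝ) ≤ ‖x₁ - x₂‖ ^ α := Real.rpow_nonneg (norm_nonneg _) _
    have hyα : (0:ℝ) ≤ |y₁ - y₂| ^ α := Real.rpow_nonneg (abs_nonneg _) _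
    have h2K : 2 * K ≤ (K+1) * ((2:ℝ) ^ (α+1) + 4 * R + 2) := by nlinarith [hRpos, h2pow]
    have hCyC : (2:ℝ) ^ (α+1) * K + 4 * K * R ≤ (K+1) * ((2:ℝ) ^ (α+1) + 4 * R + 2) := by
      nlinarith [hRpos, h2pow]
    nlinarith [hpart1, hpart2, mul_le_mul_of_nonneg_right h2K hxα,
      mul_le_mul_of_nonneg_right hCyC hyα]
end
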